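/- arXiv:2010.04721 — 7 statements merged into one kernel-verified Lean document; each statement's English description precedes it below -/
import Mathlib

section
/- Let ω : [-1/2,1/2] → ℝ be a unimodal dispersion relation, let γ > 0, let k ∈ (0,1/2), and suppose that J̃(ε − i·ω(k)) tends to a limit ζ ∈ ℂ as ε → 0+. Then the scattering coefficient ν(k) := (1 + γζ)⁻¹ satisfies |ν(k)| ≤ 2|ω̄'(k)|/(γ + 2|ω̄'(k)|), where ω̄'(k) := ω'(k)/(2π). -/
open Real Filter MeasureTheory intervalIntegral

private lemma denom_factor (ε a w : ℝ) :
    (((ε : ℂ) - Complex.I * (a : ℂ)) ^ 2 + ((w : ℂ)) ^ 2)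
      = ((ε : ℂ) - Complex.I * ((a+w : ℝ) : ℂ)) * ((ε : ℂ) - Complex.I * ((a-w : ℝ) : ℂ)) := by
  push_cast
  ring_nf
  simp [Complex.I_sq]

private lemma factor_ne (ε x : ℝ) (hε : 0 < ε) :
    ((ε : ℂ) - Complex.I * ((x : ℝ) : ℂ)) ≠ 0 := by
  intro h
  have := congrArg Complex.re h
  simp at this
  exact hε.ne' this

private lemma denom_ne (ε a w : ℝ) (hε : 0 < ε) :
    (((ε : ℂ) - Complex.I * (a : ℂ)) ^ 2 + ((w : ℂ)) ^ 2) ≠ 0 := by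
  rw [denom_factor]
  exact mul_ne_zero (factor_ne ε (a+w) hε) (factor_ne ε (a-w) hε)

private lemma re_formula (ε a w : ℝ) (hε : 0 < ε) :
    (((ε : ℂ) - Complex.I * (a : ℂ)) /
      (((ε : ℂ) - Complex.I * (a : ℂ)) ^ 2 + ((w : ℂ)) ^ 2)).re
    = (1/2) * (ε / (ε^2 + (a+w)^2) + ε / (ε^2 + (a-w)^2)) := by
  have h1 := factor_ne ε (a+w) hε
  have h2 := factor_ne ε (a-w) hε
  rw [denom_factor]
  have key : ((ε : ℂ) - Complex.I * (a : ℂ)) /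
      (((ε : ℂ) - Complex.I * ((a+w : ℝ) : ℂ)) * ((ε : ℂ) - Complex.I * ((a-w : ℝ) : ℂ)))
      = (((ε : ℂ) - Complex.I * ((a+w : ℝ) : ℂ))⁻¹ + ((ε : ℂ) - Complex.I * ((a-w : ℝ) : ℂ))⁻¹) / 2 := by
    rw [inv_add_inv h1 h2]
    have hsum : ((ε : ℂ) - Complex.I * ((a+w : ℝ) : ℂ)) + ((ε : ℂ) - Complex.I * ((a-w : ℝ) : ℂ))
        = 2 * ((ε : ℂ) - Complex.I * (a : ℂ)) := by push_cast; ring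
    rw [hsum, div_div, mul_comm _ (2:ℂ), mul_div_mul_left _ _ two_ne_zero]
  rw [key]
  have r1 : (((ε : ℂ) - Complex.I * ((a+w : ℝ) : ℂ))⁻¹).re = ε / (ε^2 + (a+w)^2) := by
    rw [Complex.inv_re]
    simp [Complex.normSq_apply]
    ring_nf
  have r2 : (((ε : ℂ) - Complex.I * ((a-w : ℝ) : ℂ))⁻¹).re = ε / (ε^2 + (a-w)^2) := by
    rw [Complex.inv_re]
    simp [Complex.normSq_apply]
    ring_nf
  have : ((((ε : ℂ) - Complex.I * ((a+w : ℝ) : ℂ))⁻¹ + ((ε : ℂ) - Complex.I * ((a-w : ℝ) : ℂ))⁻¹) / 2).re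
      = ((((ε : ℂ) - Complex.I * ((a+w : ℝ) : ℂ))⁻¹ + ((ε : ℂ) - Complex.I * ((a-w : ℝ) : ℂ))⁻¹).re) / 2 := by
    simp [Complex.div_re]
  rw [this, Complex.add_re, r1, r2]
  ring

private lemma integral_poisson (ε M δ p : ℝ) (hε : 0 < ε) (hM : 0 < M) :
    ∫ t in (p-δ)..(p+δ), ε / (ε^2 + M^2*(t-p)^2)
      = (2/M) * Real.arctan (M*δ/ε) := by
  have hcont : Continuous fun t : ℝ => ε / (ε^2 + M^2*(t-p)^2) := by
    apply Continuous.div continuous_const (by continuity)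
    intro t
    positivity
  have hF : ∀ t : ℝ, HasDerivAt (fun t => (1/M) * Real.arctan (M*(t-p)/ε))
      (ε / (ε^2 + M^2*(t-p)^2)) t := by
    intro t
    have hu : HasDerivAt (fun t : ℝ => M*(t-p)/ε) (M/ε) t := by
      have : HasDerivAt (fun t : ℝ => t - p) 1 t := (hasDerivAt_id t).sub_const p
      simpa [mul_comm, mul_div_assoc] using ((this.const_mul M).div_const ε)
    have ha := (Real.hasDerivAt_arctan (M*(t-p)/ε)).comp t hu
    have := ha.const_mul (1/M)
    refine this.congr_deriv ?_
    field_simp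
  rw [intervalIntegral.integral_eq_sub_of_hasDerivAt (fun t _ => hF t)
    (hcont.intervalIntegrable _ _)]
  have h1 : p + δ - p = δ := by ring
  have h2 : p - δ - p = -δ := by ring
  rw [h1, h2, show M * -δ = -(M*δ) by ring, neg_div, Real.arctan_neg]
  ring

set_option maxHeartbeats 1000000 in
theorem stmt1 (ω ω' : ℝ → ℝ) (γ : ℝ) (hγ : 0 < γ) (k : ℝ) (hk : k ∈ Set.Ioo (0:ℝ) (1/2))
    (hcont : ContinuousOn ω (Set.Icc (-(1/2):ℝ) (1/2)))
    (heven : ∀ ℓ ∈ Set.Icc (-(1/2):ℝ) (1/2), ω (-ℓ) = ω ℓ)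
    (hderiv : ∀ ℓ ∈ Set.Ioo (0:ℝ) (1/2), HasDerivAt ω (ω' ℓ) ℓ)
    (hderivCont : ContinuousOn ω' (Set.Ioo (0:ℝ) (1/2)))
    (hpos : ∀ ℓ ∈ Set.Ioo (0:ℝ) (1/2), 0 < ω' ℓ)
    (ζ : ℂ)
    (hlim : Filter.Tendsto
      (fun ε : ℝ => ∫ ℓ in (-(1/2):ℝ)..(1/2),
        ((ε : ℂ) - Complex.I * (ω k : ℂ)) /
          (((ε : ℂ) - Complex.I * (ω k : ℂ)) ^ 2 + ((ω ℓ : ℝ) : ℂ) ^ 2))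
      (nhdsWithin 0 (Set.Ioi 0)) (nhds ζ)) :
    ‖(1 + (γ : ℂ) * ζ)⁻¹‖
      ≤ 2 * |ω' k / (2 * Real.pi)| / (γ + 2 * |ω' k / (2 * Real.pi)|) := by
  set a := ω k with ha
  set c := ω' k with hc
  have hcpos : 0 < c := hpos k hk
  have hπ : (0:ℝ) < Real.pi := Real.pi_pos
  -- main analytic step
  have hre : Real.pi / c ≤ ζ.re := by
    -- suffices for all M > c
    have hM : ∀ M : ℝ, c < M → Real.pi / M ≤ ζ.re := by
      intro M hMc
      have hMpos : 0 < M := hcpos.trans hMc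
      -- choose δ
      obtain ⟨δ1, hδ1pos, hδ1⟩ : ∃ δ1 > 0, ∀ ⦃ℓ : ℝ⦄, dist ℓ k < δ1 → ω' ℓ < M := by
        have hnn : nhdsWithin k (Set.Ioo (0:ℝ) (1/2)) = nhds k :=
          nhdsWithin_eq_nhds.2 (isOpen_Ioo.mem_nhds hk)
        have := hderivCont k hk
        rw [ContinuousWithinAt, hnn] at this
        have hev : ∀ᶠ ℓ in nhds k, ω' ℓ < M := this (Iio_mem_nhds hMc)
        exact Metric.eventually_nhds_iff.1 hev
      set δ : ℝ := min (δ1/2) (min (k/2) ((1/2 - k)/2)) with hδdef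
      have hδpos : 0 < δ := by
        apply lt_min (by linarith)
        exact lt_min (by linarith [hk.1]) (by linarith [hk.2])
      have hδ1' : δ < δ1 := lt_of_le_of_lt (min_le_left _ _) (by linarith)
      have hδk : δ < k := lt_of_le_of_lt ((min_le_right _ _).trans (min_le_left _ _)) (by linarith [hk.1])
      have hδhalf : δ < 1/2 - k := lt_of_le_of_lt ((min_le_right _ _).trans (min_le_right _ _)) (by linarith [hk.2])
      have hsub : Set.Icc (k-δ) (k+δ) ⊆ Set.Ioo (0:ℝ) (1/2) := by
        intro x hx
        exact ⟨by linarith [hx.1], by linarith [hx.2]⟩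
      -- MVT bound
      have hlip : ∀ ℓ ∈ Set.Icc (k-δ) (k+δ), |ω ℓ - a| ≤ M * |ℓ - k| := by
        intro ℓ hℓ
        have hkm : k ∈ Set.Icc (k-δ) (k+δ) := ⟨by linarith, by linarith⟩
        have := Convex.norm_image_sub_le_of_norm_hasDerivWithin_le
          (f := ω) (f' := ω') (s := Set.Icc (k-δ) (k+δ)) (C := M)
          (fun x hx => (hderiv x (hsub hx)).hasDerivWithinAt)
          (fun x hx => by
            rw [Real.norm_eq_abs, abs_of_pos (hpos x (hsub hx))]
            exact le_of_lt (hδ1 (by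
              rw [Real.dist_eq]
              have : |x - k| ≤ δ := abs_sub_le_iff.2 ⟨by linarith [hx.2], by linarith [hx.1]⟩
              linarith)))
          (convex_Icc _ _) hkm hℓ
        simpa [Real.norm_eq_abs] using this
      -- the real integrand
      set f : ℝ → ℝ → ℝ := fun ε ℓ =>
        (((ε : ℂ) - Complex.I * (a : ℂ)) /
          (((ε : ℂ) - Complex.I * (a : ℂ)) ^ 2 + ((ω ℓ : ℝ) : ℂ) ^ 2)).re with hf
      have hfformula : ∀ ε : ℝ, 0 < ε → ∀ ℓ : ℝ,
          f ε ℓ = (1/2) * (ε / (ε^2 + (a + ω ℓ)^2) + ε / (ε^2 + (a - ω ℓ)^2)) := by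
        intro ε hε ℓ
        exact re_formula ε a (ω ℓ) hε
      have hfnonneg : ∀ ε : ℝ, 0 < ε → ∀ ℓ : ℝ, 0 ≤ f ε ℓ := by
        intro ε hε ℓ
        rw [hfformula ε hε ℓ]
        positivity
      -- continuity of f ε on Icc
      have hfc : ∀ ε : ℝ, 0 < ε → ContinuousOn (f ε) (Set.Icc (-(1/2):ℝ) (1/2)) := by
        intro ε hε
        apply Complex.continuous_re.comp_continuousOn
        apply ContinuousOn.div continuousOn_const
        · exact continuousOn_const.add (((Complex.continuous_ofReal.comp_continuousOn hcont)).pow 2)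
        · intro x hx
          exact denom_ne ε a (ω x) hε
      have hint : ∀ ε : ℝ, 0 < ε → ∀ x y : ℝ, Set.uIcc x y ⊆ Set.Icc (-(1/2):ℝ) (1/2) →
          IntervalIntegrable (f ε) volume x y := by
        intro ε hε x y hxy
        exact ((hfc ε hε).mono hxy).intervalIntegrable
      -- key lower bound for each ε > 0
      have hbound : ∀ ε : ℝ, 0 < ε →
          (2/M) * Real.arctan (M*δ/ε) ≤ (∫ ℓ in (-(1/2):ℝ)..(1/2),
            ((ε : ℂ) - Complex.I * (a : ℂ)) /
              (((ε : ℂ) - Complex.I * (a : ℂ)) ^ 2 + ((ω ℓ : ℝ) : ℂ) ^ 2)).re := by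
        intro ε hε
        -- re of integral = integral of re
        have hgint : IntervalIntegrable (fun ℓ : ℝ =>
            ((ε : ℂ) - Complex.I * (a : ℂ)) /
              (((ε : ℂ) - Complex.I * (a : ℂ)) ^ 2 + ((ω ℓ : ℝ) : ℂ) ^ 2)) volume (-(1/2)) (1/2) := by
          apply ContinuousOn.intervalIntegrable
          rw [Set.uIcc_of_le (by norm_num)]
          apply ContinuousOn.div continuousOn_const
          · exact continuousOn_const.add (((Complex.continuous_ofReal.comp_continuousOn hcont)).pow 2)
          · intro x hx
            exact denom_ne ε a (ω x) hε
        have hre_int : (∫ ℓ in (-(1/2):ℝ)..(1/2),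
            ((ε : ℂ) - Complex.I * (a : ℂ)) /
              (((ε : ℂ) - Complex.I * (a : ℂ)) ^ 2 + ((ω ℓ : ℝ) : ℂ) ^ 2)).re
            = ∫ ℓ in (-(1/2):ℝ)..(1/2), f ε ℓ := by
          exact (ContinuousLinearMap.intervalIntegral_comp_comm Complex.reCLM hgint).symm
        rw [hre_int]
        -- ordering facts
        have hord1 : (-(1/2):ℝ) ≤ -k-δ := by linarith [hk.2]
        have hord2 : (-k-δ:ℝ) ≤ -k+δ := by linarith
        have hord3 : (-k+δ:ℝ) ≤ k-δ := by linarith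
        have hord4 : (k-δ:ℝ) ≤ k+δ := by linarith
        have hord5 : (k+δ:ℝ) ≤ 1/2 := by linarith
        have s1 : Set.uIcc (-(1/2):ℝ) (-k-δ) ⊆ Set.Icc (-(1/2):ℝ) (1/2) := by
          rw [Set.uIcc_of_le hord1]; apply Set.Icc_subset_Icc le_rfl; linarith
        have s2 : Set.uIcc (-k-δ:ℝ) (-k+δ) ⊆ Set.Icc (-(1/2):ℝ) (1/2) := by
          rw [Set.uIcc_of_le hord2]; apply Set.Icc_subset_Icc (by linarith) (by linarith)
        have s3 : Set.uIcc (-k+δ:ℝ) (k-δ) ⊆ Set.Icc (-(1/2):ℝ) (1/2) := by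
          rw [Set.uIcc_of_le hord3]; apply Set.Icc_subset_Icc (by linarith) (by linarith)
        have s4 : Set.uIcc (k-δ:ℝ) (k+δ) ⊆ Set.Icc (-(1/2):ℝ) (1/2) := by
          rw [Set.uIcc_of_le hord4]; apply Set.Icc_subset_Icc (by linarith) (by linarith)
        have s5 : Set.uIcc (k+δ:ℝ) (1/2) ⊆ Set.Icc (-(1/2):ℝ) (1/2) := by
          rw [Set.uIcc_of_le hord5]; apply Set.Icc_subset_Icc (by linarith) le_rfl
        have i1 := hint ε hε _ _ s1
        have i2 := hint ε hε _ _ s2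
        have i3 := hint ε hε _ _ s3
        have i4 := hint ε hε _ _ s4
        have i5 := hint ε hε _ _ s5
        -- splitting
        have hsplit : (∫ ℓ in (-(1/2):ℝ)..(1/2), f ε ℓ)
            = (∫ ℓ in (-(1/2):ℝ)..(-k-δ), f ε ℓ) + (∫ ℓ in (-k-δ:ℝ)..(-k+δ), f ε ℓ)
              + (∫ ℓ in (-k+δ:ℝ)..(k-δ), f ε ℓ) + (∫ ℓ in (k-δ:ℝ)..(k+δ), f ε ℓ)
              + (∫ ℓ in (k+δ:ℝ)..(1/2), f ε ℓ) := by
          rw [intervalIntegral.integral_add_adjacent_intervals i1 i2,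
            intervalIntegral.integral_add_adjacent_intervals (i1.trans i2) i3,
            intervalIntegral.integral_add_adjacent_intervals ((i1.trans i2).trans i3) i4,
            intervalIntegral.integral_add_adjacent_intervals (((i1.trans i2).trans i3).trans i4) i5]
        have hn1 : (0:ℝ) ≤ ∫ ℓ in (-(1/2):ℝ)..(-k-δ), f ε ℓ :=
          intervalIntegral.integral_nonneg hord1 (fun x _ => hfnonneg ε hε x)
        have hn3 : (0:ℝ) ≤ ∫ ℓ in (-k+δ:ℝ)..(k-δ), f ε ℓ :=
          intervalIntegral.integral_nonneg hord3 (fun x _ => hfnonneg ε hε x)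
        have hn5 : (0:ℝ) ≤ ∫ ℓ in (k+δ:ℝ)..(1/2), f ε ℓ :=
          intervalIntegral.integral_nonneg hord5 (fun x _ => hfnonneg ε hε x)
        -- lower bound on the two key intervals
        have hlow4 : (1/M) * Real.arctan (M*δ/ε) ≤ ∫ ℓ in (k-δ:ℝ)..(k+δ), f ε ℓ := by
          have hcomp : ∀ x ∈ Set.Icc (k-δ) (k+δ),
              (1/2) * (ε / (ε^2 + M^2*(x-k)^2)) ≤ f ε x := by
            intro x hx
            rw [hfformula ε hε x]
            have h1 : (a - ω x)^2 ≤ M^2*(x-k)^2 := by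
              have := hlip x hx
              have h2 : |a - ω x| ≤ M * |x - k| := by rwa [abs_sub_comm] at this
              calc (a - ω x)^2 = |a - ω x|^2 := (sq_abs _).symm
                _ ≤ (M * |x-k|)^2 := by
                    apply sq_le_sq' <;> [linarith [abs_nonneg (a - ω x)]; exact h2]
                _ = M^2*(x-k)^2 := by rw [mul_pow, sq_abs]
            have hd1 : (0:ℝ) < ε^2 + (a - ω x)^2 := by positivity
            have : ε / (ε^2 + M^2*(x-k)^2) ≤ ε / (ε^2 + (a - ω x)^2) :=
              div_le_div_of_nonneg_left hε.le hd1 (by linarith)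
            have hnn : (0:ℝ) ≤ ε / (ε^2 + (a + ω x)^2) := by positivity
            linarith
          have hintlow : IntervalIntegrable (fun x : ℝ => (1/2) * (ε / (ε^2 + M^2*(x-k)^2)))
              volume (k-δ) (k+δ) := by
            apply Continuous.intervalIntegrable
            apply Continuous.mul continuous_const
            apply Continuous.div continuous_const
            · exact continuous_const.add (continuous_const.mul ((continuous_id.sub continuous_const).pow 2))
            · intro t; positivity
          have := intervalIntegral.integral_mono_on hord4 hintlow (hint ε hε _ _ s4) hcomp
          calc (1/M) * Real.arctan (M*δ/ε)
              = ∫ x in (k-δ:ℝ)..(k+δ), (1/2) * (ε / (ε^2 + M^2*(x-k)^2)) := by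
                rw [intervalIntegral.integral_const_mul, integral_poisson ε M δ k hε hMpos]
                ring
            _ ≤ _ := this
        have hlow2 : (1/M) * Real.arctan (M*δ/ε) ≤ ∫ ℓ in (-k-δ:ℝ)..(-k+δ), f ε ℓ := by
          have hcomp : ∀ x ∈ Set.Icc (-k-δ) (-k+δ),
              (1/2) * (ε / (ε^2 + M^2*(x-(-k))^2)) ≤ f ε x := by
            intro x hx
            have hxneg : -x ∈ Set.Icc (k-δ) (k+δ) := ⟨by linarith [hx.2], by linarith [hx.1]⟩
            have hxIcc : -x ∈ Set.Icc (-(1/2):ℝ) (1/2) := by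
              constructor <;> [linarith [hxneg.1, hδk, hk.2]; linarith [hxneg.2, hδhalf]]
            have hωx : ω x = ω (-x) := by
              have := heven (-x) hxIcc
              simpa using this
            rw [hfformula ε hε x]
            have h1 : (a - ω x)^2 ≤ M^2*(x-(-k))^2 := by
              have := hlip (-x) hxneg
              have h2 : |a - ω x| ≤ M * |(-x) - k| := by rw [hωx, abs_sub_comm]; exact this
              calc (a - ω x)^2 = |a - ω x|^2 := (sq_abs _).symm
                _ ≤ (M * |(-x)-k|)^2 := by
                    apply sq_le_sq' <;> [linarith [abs_nonneg (a - ω x)]; exact h2]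
                _ = M^2*(x-(-k))^2 := by rw [mul_pow, sq_abs]; ring
            have hd1 : (0:ℝ) < ε^2 + (a - ω x)^2 := by positivity
            have : ε / (ε^2 + M^2*(x-(-k))^2) ≤ ε / (ε^2 + (a - ω x)^2) :=
              div_le_div_of_nonneg_left hε.le hd1 (by linarith)
            have hnn : (0:ℝ) ≤ ε / (ε^2 + (a + ω x)^2) := by positivity
            linarith
          have hintlow : IntervalIntegrable (fun x : ℝ => (1/2) * (ε / (ε^2 + M^2*(x-(-k))^2)))
              volume (-k-δ) (-k+δ) := by
            apply Continuous.intervalIntegrable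
            apply Continuous.mul continuous_const
            apply Continuous.div continuous_const
            · exact continuous_const.add (continuous_const.mul ((continuous_id.sub continuous_const).pow 2))
            · intro t; positivity
          have := intervalIntegral.integral_mono_on hord2 hintlow (hint ε hε _ _ s2) hcomp
          calc (1/M) * Real.arctan (M*δ/ε)
              = ∫ x in (-k-δ:ℝ)..(-k+δ), (1/2) * (ε / (ε^2 + M^2*(x-(-k))^2)) := by
                rw [intervalIntegral.integral_const_mul, integral_poisson ε M δ (-k) hε hMpos]
                ring
            _ ≤ _ := this
        rw [hsplit]
        have : (2/M) * Real.arctan (M*δ/ε) = (1/M) * Real.arctan (M*δ/ε) + (1/M) * Real.arctan (M*δ/ε) := by ring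
        rw [this]
        linarith
      -- limits
      have hlim_re : Tendsto (fun ε : ℝ => (∫ ℓ in (-(1/2):ℝ)..(1/2),
          ((ε : ℂ) - Complex.I * (a : ℂ)) /
            (((ε : ℂ) - Complex.I * (a : ℂ)) ^ 2 + ((ω ℓ : ℝ) : ℂ) ^ 2)).re)
          (nhdsWithin 0 (Set.Ioi 0)) (nhds ζ.re) :=
        (Complex.continuous_re.tendsto ζ).comp hlim
      have hlim_lb : Tendsto (fun ε : ℝ => (2/M) * Real.arctan (M*δ/ε))
          (nhdsWithin 0 (Set.Ioi 0)) (nhds (Real.pi / M)) := by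
        have h0 : Tendsto (fun ε : ℝ => M*δ/ε) (nhdsWithin 0 (Set.Ioi 0)) atTop := by
          have := tendsto_inv_nhdsGT_zero.const_mul_atTop (show (0:ℝ) < M*δ by positivity)
          simpa [div_eq_mul_inv] using this
        have h1 : Tendsto (fun ε : ℝ => Real.arctan (M*δ/ε)) (nhdsWithin 0 (Set.Ioi 0))
            (nhds (Real.pi/2)) :=
          (Real.tendsto_arctan_atTop.mono_right nhdsWithin_le_nhds).comp h0
        have := h1.const_mul (2/M)
        convert this using 2
        field_simp
      refine le_of_tendsto_of_tendsto hlim_lb hlim_re ?_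
      filter_upwards [self_mem_nhdsWithin] with ε hε
      exact hbound ε hε
    -- take limit M → c⁺
    have hten : Tendsto (fun M : ℝ => Real.pi / M) (nhdsWithin c (Set.Ioi c)) (nhds (Real.pi / c)) := by
      apply Tendsto.mono_left _ nhdsWithin_le_nhds
      exact (continuousAt_const.div continuousAt_id hcpos.ne').tendsto
    exact le_of_tendsto hten (eventually_nhdsWithin_of_forall (fun M hMc => hM M hMc))
  -- final algebra
  have habs : (1:ℝ) + γ * (Real.pi / c) ≤ ‖1 + (γ:ℂ) * ζ‖ := by
    have h1 : (1 + (γ:ℂ) * ζ).re = 1 + γ * ζ.re := by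
      simp [Complex.add_re, Complex.mul_re]
    calc (1:ℝ) + γ * (Real.pi / c) ≤ 1 + γ * ζ.re := by nlinarith
      _ = (1 + (γ:ℂ) * ζ).re := h1.symm
      _ ≤ ‖1 + (γ:ℂ) * ζ‖ := Complex.re_le_norm _
  have hpos1 : (0:ℝ) < 1 + γ * (Real.pi / c) := by positivity
  have hrhs : 2 * |c / (2 * Real.pi)| / (γ + 2 * |c / (2 * Real.pi)|)
      = (1 + γ * (Real.pi / c))⁻¹ := by
    rw [abs_of_pos (by positivity)]
    have h2 : γ + 2 * (c / (2 * Real.pi)) ≠ 0 := by positivity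
    have h3 : (1:ℝ) + γ * (Real.pi / c) ≠ 0 := by positivity
    field_simp
    ring
  rw [norm_inv, hrhs]
  exact inv_anti₀ hpos1 habs
end

section
/- Let ω : [-1/2,1/2] → ℝ be a unimodal dispersion relation, let γ > 0, let k ∈ (0,1/2), and suppose that J̃(ε − i·ω(k)) tends to a limit ζ ∈ ℂ as ε → 0+. Then the scattering coefficient ν(k) := (1 + γζ)⁻¹ satisfies Re ν(k) > 0. -/
theorem stmt2 (ω ω' : ℝ → ℝ) (γ : ℝ) (hγ : 0 < γ) (k : ℝ) (hk : k ∈ Set.Ioo (0:ℝ) (1/2))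
    (hcont : ContinuousOn ω (Set.Icc (-(1/2):ℝ) (1/2)))
    (heven : ∀ ℓ ∈ Set.Icc (-(1/2):ℝ) (1/2), ω (-ℓ) = ω ℓ)
    (hderiv : ∀ ℓ ∈ Set.Ioo (0:ℝ) (1/2), HasDerivAt ω (ω' ℓ) ℓ)
    (hderivCont : ContinuousOn ω' (Set.Ioo (0:ℝ) (1/2)))
    (hpos : ∀ ℓ ∈ Set.Ioo (0:ℝ) (1/2), 0 < ω' ℓ)
    (ζ : ℂ)
    (hlim : Filter.Tendsto
      (fun ε : ℝ => ∫ ℓ in (-(1/2):ℝ)..(1/2),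
        ((ε : ℂ) - Complex.I * (ω k : ℂ)) /
          (((ε : ℂ) - Complex.I * (ω k : ℂ)) ^ 2 + ((ω ℓ : ℝ) : ℂ) ^ 2))
      (nhdsWithin 0 (Set.Ioi 0)) (nhds ζ)) :
    0 < ((1 + (γ : ℂ) * ζ)⁻¹).re := by
  -- Step 1: Re ζ ≥ 0
  have hre : 0 ≤ ζ.re := by
    have h1 : Filter.Tendsto
        (fun ε : ℝ => (∫ ℓ in (-(1/2):ℝ)..(1/2),
          ((ε : ℂ) - Complex.I * (ω k : ℂ)) /
            (((ε : ℂ) - Complex.I * (ω k : ℂ)) ^ 2 + ((ω ℓ : ℝ) : ℂ) ^ 2)).re)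
        (nhdsWithin 0 (Set.Ioi 0)) (nhds ζ.re) :=
      (Complex.continuous_re.continuousAt.tendsto.comp hlim)
    refine ge_of_tendsto h1 ?_
    filter_upwards [self_mem_nhdsWithin] with ε (hε : ε ∈ Set.Ioi (0:ℝ))
    have hε0 : (0:ℝ) ≤ ε := le_of_lt hε
    set f : ℝ → ℂ := fun ℓ => ((ε : ℂ) - Complex.I * (ω k : ℂ)) /
        (((ε : ℂ) - Complex.I * (ω k : ℂ)) ^ 2 + ((ω ℓ : ℝ) : ℂ) ^ 2) with hf
    have hpt : ∀ ℓ : ℝ, 0 ≤ (f ℓ).re := by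
      intro ℓ
      rw [hf]
      simp only [Complex.div_re]
      rw [← add_div]
      apply div_nonneg _ (Complex.normSq_nonneg _)
      have h2 : (((ε : ℂ) - Complex.I * (ω k : ℂ))).re = ε := by simp
      have h3 : (((ε : ℂ) - Complex.I * (ω k : ℂ))).im = -(ω k) := by simp
      have h4 : ((((ε : ℂ) - Complex.I * (ω k : ℂ)) ^ 2 + ((ω ℓ : ℝ) : ℂ) ^ 2)).re
          = ε^2 - (ω k)^2 + (ω ℓ)^2 := by
        simp [pow_two, Complex.mul_re, Complex.mul_im]
      have h5 : ((((ε : ℂ) - Complex.I * (ω k : ℂ)) ^ 2 + ((ω ℓ : ℝ) : ℂ) ^ 2)).im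
          = -(2 * ε * ω k) := by
        simp [pow_two, Complex.mul_re, Complex.mul_im]; ring
      rw [h2, h3, h4, h5]
      have : ε * (ε ^ 2 - ω k ^ 2 + ω ℓ ^ 2) + -ω k * -(2 * ε * ω k)
          = ε * (ε^2 + (ω k)^2 + (ω ℓ)^2) := by ring
      rw [this]
      positivity
    by_cases hint : IntervalIntegrable f MeasureTheory.volume (-(1/2):ℝ) (1/2)
    · have := (Complex.reCLM.intervalIntegral_comp_comm hint (a := (-(1/2):ℝ)) (b := (1/2:ℝ)))
      simp only [Complex.reCLM_apply] at this
      rw [← this]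
      exact intervalIntegral.integral_nonneg (by norm_num) (fun u _ => hpt u)
    · rw [intervalIntegral.integral_undef hint]
      simp
  -- Step 2: conclude
  have hwre : 0 < (1 + (γ : ℂ) * ζ).re := by
    have : (1 + (γ : ℂ) * ζ).re = 1 + γ * ζ.re := by
      simp [Complex.add_re, Complex.mul_re]
    rw [this]
    nlinarith
  have hne : (1 + (γ : ℂ) * ζ) ≠ 0 := by
    intro h
    rw [h] at hwre
    simp at hwre
  rw [Complex.inv_re]
  exact div_pos hwre (Complex.normSq_pos.mpr hne)
end

section
/- Let ω : [-1/2,1/2] → ℝ be a unimodal dispersion relation, let γ > 0, let k ∈ (0,1/2), and suppose that J̃(ε − i·ω(k)) tends to a limit ζ ∈ ℂ as ε → 0+; put ν(k) := (1 + γζ)⁻¹ and ω̄'(k) := ω'(k)/(2π). Then the transmission coefficient p₊(k) := |1 − γν(k)/(2|ω̄'(k)|)|² satisfies p₊(k) > 0, and the reflection coefficient p₋(k) := (γ|ν(k)|/(2|ω̄'(k)|))² satisfies 0 < p₋(k) < 1. -/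
lemma re_inv_aux (ε c : ℝ) : (((ε:ℂ) - Complex.I * c)⁻¹).re = ε/(ε^2+c^2) := by
  rw [Complex.inv_re, Complex.normSq_apply]
  norm_num [pow_two]

lemma ne_aux (ε c : ℝ) (hε : 0 < ε) : ((ε:ℂ) - Complex.I * c) ≠ 0 := by
  intro h
  have := congrArg Complex.re h
  simp at this
  exact hε.ne' this

lemma fac_aux (ε b w : ℝ) : ((ε:ℂ) - Complex.I * b)^2 + (w:ℂ)^2
    = ((ε:ℂ) - Complex.I * ((b+w:ℝ):ℂ)) * ((ε:ℂ) - Complex.I * ((b-w:ℝ):ℂ)) := by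
  push_cast
  linear_combination ((w:ℂ)^2) * Complex.I_sq

lemma den_ne (ε b w : ℝ) (hε : 0 < ε) : ((ε:ℂ) - Complex.I * b)^2 + (w:ℂ)^2 ≠ 0 := by
  rw [fac_aux]
  exact mul_ne_zero (ne_aux ε (b+w) hε) (ne_aux ε (b-w) hε)

lemma abstract_pf (z1 z2 l : ℂ) (h1 : z1 ≠ 0) (h2 : z2 ≠ 0) (hl : z1 + z2 = 2 * l) :
    (z1⁻¹ + z2⁻¹)/2 = l / (z1 * z2) := by
  rw [inv_add_inv h1 h2, hl, div_div, mul_comm (z1*z2) 2, mul_div_mul_left _ _ two_ne_zero]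

lemma re_pf (ε b w : ℝ) (hε : 0 < ε) :
    (((ε:ℂ) - Complex.I * b) / (((ε:ℂ) - Complex.I * b)^2 + (w:ℂ)^2)).re
      = (ε/(ε^2+(b+w)^2) + ε/(ε^2+(b-w)^2))/2 := by
  have hsum := abstract_pf _ _ ((ε:ℂ) - Complex.I * b) (ne_aux ε (b+w) hε)
    (ne_aux ε (b-w) hε) (by push_cast; ring)
  rw [fac_aux, ← hsum]
  have h2 : ∀ u : ℂ, (u/2).re = u.re/2 := fun u => by
    simp [Complex.div_ofNat_re]
  rw [h2, Complex.add_re, re_inv_aux, re_inv_aux]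

lemma poisson_int (ε c η K : ℝ) (hε : 0 < ε) (hc : 0 < c) :
    ∫ ℓ in (K-η)..(K+η), ε/(ε^2+c^2*(ℓ-K)^2) = 2/c * Real.arctan (c*η/ε) := by
  have hcont : Continuous fun ℓ : ℝ => ε/(ε^2+c^2*(ℓ-K)^2) :=
    continuous_const.div (by continuity) (fun x => by positivity)
  have hF : ∀ x : ℝ, HasDerivAt (fun ℓ => (1/c) * Real.arctan (c*(ℓ-K)/ε))
      (ε/(ε^2+c^2*(x-K)^2)) x := by
    intro x
    have h1 : HasDerivAt (fun ℓ : ℝ => c*(ℓ-K)/ε) (c/ε) x := by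
      simpa using (((hasDerivAt_id x).sub_const K).const_mul c).div_const ε
    have h2 := (Real.hasDerivAt_arctan (c*(x-K)/ε)).comp x h1
    have h3 := h2.const_mul (1/c)
    refine h3.congr_deriv ?_
    have h4 : (0:ℝ) < ε^2+c^2*(x-K)^2 := by positivity
    field_simp
  rw [intervalIntegral.integral_eq_sub_of_hasDerivAt (fun x _ => hF x)
    (hcont.intervalIntegrable _ _)]
  have e1 : c*(K+η-K)/ε = c*η/ε := by ring
  have e2 : c*(K-η-K)/ε = -(c*η/ε) := by ring
  rw [e1, e2, Real.arctan_neg]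
  ring

theorem stmt4 (ω ω' : ℝ → ℝ) (γ : ℝ) (hγ : 0 < γ) (k : ℝ) (hk : k ∈ Set.Ioo (0:ℝ) (1/2))
    (hcont : ContinuousOn ω (Set.Icc (-(1/2):ℝ) (1/2)))
    (heven : ∀ ℓ ∈ Set.Icc (-(1/2):ℝ) (1/2), ω (-ℓ) = ω ℓ)
    (hderiv : ∀ ℓ ∈ Set.Ioo (0:ℝ) (1/2), HasDerivAt ω (ω' ℓ) ℓ)
    (hderivCont : ContinuousOn ω' (Set.Ioo (0:ℝ) (1/2)))
    (hpos : ∀ ℓ ∈ Set.Ioo (0:ℝ) (1/2), 0 < ω' ℓ)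
    (ζ : ℂ)
    (hlim : Filter.Tendsto
      (fun ε : ℝ => ∫ ℓ in (-(1/2):ℝ)..(1/2),
        ((ε : ℂ) - Complex.I * (ω k : ℂ)) /
          (((ε : ℂ) - Complex.I * (ω k : ℂ)) ^ 2 + ((ω ℓ : ℝ) : ℂ) ^ 2))
      (nhdsWithin 0 (Set.Ioi 0)) (nhds ζ)) :
    0 < ‖1 - (γ : ℂ) * (1 + (γ : ℂ) * ζ)⁻¹ / ((2 * |ω' k / (2 * Real.pi)| : ℝ) : ℂ)‖ ^ 2 ∧
    0 < (γ * ‖(1 + (γ : ℂ) * ζ)⁻¹‖ / (2 * |ω' k / (2 * Real.pi)|)) ^ 2 ∧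
    (γ * ‖(1 + (γ : ℂ) * ζ)⁻¹‖ / (2 * |ω' k / (2 * Real.pi)|)) ^ 2 < 1 := by
  have hπ := Real.pi_pos
  obtain ⟨hk0, hk2⟩ := hk
  set b := ω k with hbdef
  set A := ω' k with hAdef
  have hA : 0 < A := hpos k ⟨hk0, hk2⟩
  set δ := A^2/(2*γ*Real.pi) with hδdef
  have hδ : 0 < δ := by positivity
  set c := A + δ with hcdef
  have hc : 0 < c := by positivity
  -- window around k
  have hdk : HasDerivAt ω A k := hderiv k ⟨hk0, hk2⟩
  have hlo : ∀ᶠ x in nhds k, ‖ω x - ω k - (x - k) • A‖ ≤ δ * ‖x - k‖ :=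
    (hasDerivAt_iff_isLittleO.mp hdk).bound hδ
  obtain ⟨η0, hη0pos, hη0⟩ := Metric.eventually_nhds_iff.mp
    (hlo.and (isOpen_Ioo.eventually_mem (⟨hk0, hk2⟩ : k ∈ Set.Ioo (0:ℝ) (1/2))))
  set η := η0/2 with hηdef
  have hη : 0 < η := by positivity
  have hwin : ∀ x ∈ Set.Icc (k-η) (k+η), |ω x - b| ≤ c * |x - k| ∧ x ∈ Set.Ioo (0:ℝ) (1/2) := by
    intro x hx
    have hdist : dist x k < η0 := by
      rw [Real.dist_eq, abs_lt]
      rw [Set.mem_Icc] at hx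
      constructor <;> [linarith [hx.1, hη0pos]; linarith [hx.2, hη0pos]]
    have h := hη0 hdist
    refine ⟨?_, h.2⟩
    have h1 := h.1
    rw [smul_eq_mul, Real.norm_eq_abs, Real.norm_eq_abs] at h1
    calc |ω x - b| = |(ω x - ω k - (x-k)*A) + (x-k)*A| := by rw [hbdef]; ring_nf
      _ ≤ |ω x - ω k - (x-k)*A| + |(x-k)*A| := abs_add_le _ _
      _ ≤ δ * |x-k| + |x-k| * A := by
          rw [abs_mul, abs_of_pos hA]
          exact add_le_add h1 le_rfl
      _ = c * |x-k| := by rw [hcdef]; ring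
  have hsub : Set.Icc (k-η) (k+η) ⊆ Set.Ioo (0:ℝ) (1/2) := fun x hx => (hwin x hx).2
  have hkη0 : 0 < k - η := (hsub ⟨le_rfl, by linarith⟩).1
  have hkη2 : k + η < 1/2 := (hsub ⟨by linarith, le_rfl⟩).2
  -- the real part function
  set f : ℝ → ℝ → ℝ := fun ε ℓ =>
    (((ε:ℂ) - Complex.I * (b:ℂ)) / (((ε:ℂ) - Complex.I * (b:ℂ))^2 + ((ω ℓ : ℝ):ℂ)^2)).re
    with hfdef
  have hfeq : ∀ ε : ℝ, 0 < ε → ∀ ℓ,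
      f ε ℓ = (ε/(ε^2+(b+ω ℓ)^2) + ε/(ε^2+(b-ω ℓ)^2))/2 := fun ε hε ℓ => re_pf ε b (ω ℓ) hε
  have hf0 : ∀ ε : ℝ, 0 < ε → ∀ ℓ, 0 ≤ f ε ℓ := by
    intro ε hε ℓ
    rw [hfeq ε hε ℓ]
    positivity
  -- continuity / integrability
  have hfc : ∀ ε : ℝ, 0 < ε → ContinuousOn (f ε) (Set.Icc (-(1/2):ℝ) (1/2)) := by
    intro ε hε
    apply Complex.continuous_re.comp_continuousOn
    apply ContinuousOn.div continuousOn_const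
    · exact continuousOn_const.add
        (((Complex.continuous_ofReal.comp_continuousOn hcont)).pow 2)
    · intro x _
      exact den_ne ε b (ω x) hε
  have hInt : ∀ ε : ℝ, 0 < ε → IntervalIntegrable (f ε) MeasureTheory.volume (-(1/2)) (1/2) := by
    intro ε hε
    apply ContinuousOn.intervalIntegrable
    rw [Set.uIcc_of_le (by norm_num : (-(1/2):ℝ) ≤ 1/2)]
    exact hfc ε hε
  -- evenness
  have heq2 : ∀ ε : ℝ, 0 < ε →
      (∫ ℓ in (-(1/2):ℝ)..(1/2), f ε ℓ) = 2 * ∫ ℓ in (0:ℝ)..(1/2), f ε ℓ := by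
    intro ε hε
    have h1 : IntervalIntegrable (f ε) MeasureTheory.volume (-(1/2)) 0 :=
      (hInt ε hε).mono_set (by rw [Set.uIcc_of_le (by norm_num : (-(1/2):ℝ) ≤ 0),
        Set.uIcc_of_le (by norm_num : (-(1/2):ℝ) ≤ 1/2)]; exact Set.Icc_subset_Icc le_rfl (by norm_num))
    have h2 : IntervalIntegrable (f ε) MeasureTheory.volume 0 (1/2) :=
      (hInt ε hε).mono_set (by rw [Set.uIcc_of_le (by norm_num : (0:ℝ) ≤ 1/2),
        Set.uIcc_of_le (by norm_num : (-(1/2):ℝ) ≤ 1/2)]; exact Set.Icc_subset_Icc (by norm_num) le_rfl)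
    rw [← intervalIntegral.integral_add_adjacent_intervals h1 h2]
    have h3 : (∫ ℓ in (-(1/2):ℝ)..(0:ℝ), f ε ℓ) = ∫ ℓ in (0:ℝ)..(1/2), f ε ℓ := by
      have h4 : (∫ ℓ in (0:ℝ)..(1/2), f ε (-ℓ)) = ∫ ℓ in (-(1/2):ℝ)..(-0:ℝ), f ε ℓ :=
        intervalIntegral.integral_comp_neg (f ε)
      rw [neg_zero] at h4
      rw [← h4]
      apply intervalIntegral.integral_congr
      intro x hx
      rw [Set.uIcc_of_le (by norm_num : (0:ℝ) ≤ 1/2)] at hx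
      have hωx : ω (-x) = ω x := heven x ⟨by linarith [hx.1], by linarith [hx.2]⟩
      simp only [hfdef, hωx]
    rw [h3]
    ring
  -- the key lower bound for each ε > 0
  have hkey : ∀ ε : ℝ, ε ∈ Set.Ioi (0:ℝ) →
      2/c * Real.arctan (c*η/ε) ≤
        (∫ ℓ in (-(1/2):ℝ)..(1/2),
          ((ε : ℂ) - Complex.I * (ω k : ℂ)) /
            (((ε : ℂ) - Complex.I * (ω k : ℂ)) ^ 2 + ((ω ℓ : ℝ) : ℂ) ^ 2)).re := by
    intro ε hε
    rw [Set.mem_Ioi] at hε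
    -- re of integral = integral of re
    have hFI : IntervalIntegrable (fun ℓ : ℝ =>
        ((ε : ℂ) - Complex.I * (ω k : ℂ)) /
          (((ε : ℂ) - Complex.I * (ω k : ℂ)) ^ 2 + ((ω ℓ : ℝ) : ℂ) ^ 2))
        MeasureTheory.volume (-(1/2)) (1/2) := by
      apply ContinuousOn.intervalIntegrable
      rw [Set.uIcc_of_le (by norm_num)]
      apply ContinuousOn.div continuousOn_const
      · exact continuousOn_const.add
          (((Complex.continuous_ofReal.comp_continuousOn hcont)).pow 2)
      · intro x _
        exact den_ne ε b (ω x) hε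
    have hre : (∫ ℓ in (-(1/2):ℝ)..(1/2),
        ((ε : ℂ) - Complex.I * (ω k : ℂ)) /
          (((ε : ℂ) - Complex.I * (ω k : ℂ)) ^ 2 + ((ω ℓ : ℝ) : ℂ) ^ 2)).re
        = ∫ ℓ in (-(1/2):ℝ)..(1/2), f ε ℓ :=
      (Complex.reCLM.intervalIntegral_comp_comm hFI).symm
    rw [hre, heq2 ε hε]
    -- lower bound on the window
    have hgc : Continuous fun ℓ : ℝ => ε/(ε^2+c^2*(ℓ-k)^2) :=
      continuous_const.div
        (continuous_const.add (continuous_const.mul ((continuous_id.sub continuous_const).pow 2)))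
        (fun x => by positivity)
    have hmono1 : (∫ ℓ in (k-η)..(k+η), ε/(ε^2+c^2*(ℓ-k)^2))
        ≤ ∫ ℓ in (k-η)..(k+η), 2 * f ε ℓ := by
      apply intervalIntegral.integral_mono_on (by linarith)
      · exact (hgc.intervalIntegrable _ _)
      · exact ((hInt ε hε).mono_set (by
          rw [Set.uIcc_of_le (by linarith : k-η ≤ k+η),
            Set.uIcc_of_le (by norm_num : (-(1/2):ℝ) ≤ 1/2)]
          exact Set.Icc_subset_Icc (by linarith) (by linarith))).const_mul 2
      · intro x hx
        have hb1 : |ω x - b| ≤ c * |x - k| := (hwin x hx).1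
        have hb2 : (b - ω x)^2 ≤ c^2 * (x-k)^2 := by
          have h7 := pow_le_pow_left₀ (abs_nonneg _) hb1 2
          rw [mul_pow, sq_abs, sq_abs] at h7
          nlinarith [h7]
        rw [hfeq ε hε x]
        have h5 : ε/(ε^2+c^2*(x-k)^2) ≤ ε/(ε^2+(b-ω x)^2) := by
          apply div_le_div_of_nonneg_left hε.le (by positivity)
          linarith
        have h6 : 0 ≤ ε/(ε^2+(b+ω x)^2) := by positivity
        calc ε/(ε^2+c^2*(x-k)^2) ≤ ε/(ε^2+(b-ω x)^2) := h5
          _ ≤ ε/(ε^2+(b+ω x)^2) + ε/(ε^2+(b-ω x)^2) := by linarith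
          _ = 2 * ((ε/(ε^2+(b+ω x)^2) + ε/(ε^2+(b-ω x)^2))/2) := by ring
    have hmono2 : (∫ ℓ in (k-η)..(k+η), f ε ℓ) ≤ ∫ ℓ in (0:ℝ)..(1/2), f ε ℓ := by
      apply intervalIntegral.integral_mono_interval (by linarith) (by linarith) (by linarith)
      · exact Filter.Eventually.of_forall (hf0 ε hε)
      · exact (hInt ε hε).mono_set (by
          rw [Set.uIcc_of_le (by norm_num : (0:ℝ) ≤ 1/2),
            Set.uIcc_of_le (by norm_num : (-(1/2):ℝ) ≤ 1/2)]
          exact Set.Icc_subset_Icc (by norm_num) le_rfl)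
    have hpois := poisson_int ε c η k hε hc
    have hmul : (∫ ℓ in (k-η)..(k+η), 2 * f ε ℓ) = 2 * ∫ ℓ in (k-η)..(k+η), f ε ℓ :=
      intervalIntegral.integral_const_mul 2 (f ε)
    calc 2/c * Real.arctan (c*η/ε) = ∫ ℓ in (k-η)..(k+η), ε/(ε^2+c^2*(ℓ-k)^2) := hpois.symm
      _ ≤ ∫ ℓ in (k-η)..(k+η), 2 * f ε ℓ := hmono1
      _ = 2 * ∫ ℓ in (k-η)..(k+η), f ε ℓ := hmul
      _ ≤ 2 * ∫ ℓ in (0:ℝ)..(1/2), f ε ℓ := by linarith [hmono2]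
  -- pass to the limit
  have htζ : Filter.Tendsto (fun ε : ℝ => (∫ ℓ in (-(1/2):ℝ)..(1/2),
      ((ε : ℂ) - Complex.I * (ω k : ℂ)) /
        (((ε : ℂ) - Complex.I * (ω k : ℂ)) ^ 2 + ((ω ℓ : ℝ) : ℂ) ^ 2)).re)
      (nhdsWithin 0 (Set.Ioi 0)) (nhds ζ.re) :=
    (Complex.continuous_re.tendsto ζ).comp hlim
  have hinf : Filter.Tendsto (fun ε : ℝ => c*η/ε) (nhdsWithin 0 (Set.Ioi 0)) Filter.atTop := by
    have := tendsto_inv_nhdsGT_zero (𝕜 := ℝ)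
    have h2 := Filter.Tendsto.const_mul_atTop (by positivity : 0 < c*η) this
    simpa [div_eq_mul_inv] using h2
  have htL : Filter.Tendsto (fun ε : ℝ => 2/c * Real.arctan (c*η/ε))
      (nhdsWithin 0 (Set.Ioi 0)) (nhds (2/c * (Real.pi/2))) := by
    have harc := (Real.tendsto_arctan_atTop.mono_right nhdsWithin_le_nhds).comp hinf
    exact harc.const_mul (2/c)
  have hζre : Real.pi / c ≤ ζ.re := by
    have h := le_of_tendsto_of_tendsto htL htζ
      (Filter.eventually_of_mem self_mem_nhdsWithin hkey)
    calc Real.pi / c = 2/c * (Real.pi/2) := by ring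
      _ ≤ ζ.re := h
  -- final algebra
  set w := 1 + (γ:ℂ) * ζ with hwdef
  have hwre : γ * Real.pi / A < w.re := by
    have hwre' : w.re = 1 + γ * ζ.re := by
      simp [hwdef, Complex.add_re, Complex.mul_re]
    rw [hwre', div_lt_iff₀ hA]
    have hx2 : γ * A * Real.pi ≤ γ * A * (ζ.re * c) := by
      have : Real.pi ≤ ζ.re * c := by
        rw [div_le_iff₀ hc] at hζre
        exact hζre
      exact mul_le_mul_of_nonneg_left this (le_of_lt (mul_pos hγ hA))
    have h5 : 2*γ*Real.pi*δ = A^2 := by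
      rw [hδdef]
      field_simp
    nlinarith [mul_pos hA hδ, mul_pos hA hA, mul_pos hγ hπ]
  have hwa : γ * Real.pi / A < ‖w‖ := lt_of_lt_of_le hwre (Complex.re_le_norm w)
  have hgood : 0 < γ * Real.pi / A := by positivity
  have hw0 : w ≠ 0 := by
    intro h
    rw [h] at hwre
    simp at hwre
    linarith
  have habs : |ω' k / (2 * Real.pi)| = A / (2*Real.pi) := by
    rw [← hAdef, abs_of_pos (by positivity)]
  have h2r : 2 * |ω' k / (2 * Real.pi)| = A / Real.pi := by
    rw [habs]; field_simp
  have hwapos : 0 < ‖w‖ := norm_pos_iff.mpr hw0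
  refine ⟨?_, ?_, ?_⟩
  · -- transmission positive
    apply pow_pos
    rw [norm_pos_iff]
    intro h
    have h2 : (γ:ℂ) * w⁻¹ / ((2 * |ω' k / (2 * Real.pi)| : ℝ):ℂ) = 1 := (sub_eq_zero.mp h).symm
    rw [show ((2 * |ω' k / (2 * Real.pi)| : ℝ):ℂ) = ((A/Real.pi : ℝ):ℂ) from by rw [h2r]] at h2
    have hAπ : ((A / Real.pi : ℝ):ℂ) ≠ 0 := by
      simp only [ne_eq, Complex.ofReal_eq_zero]
      positivity
    rw [div_eq_one_iff_eq hAπ] at h2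
    have h4 : (γ:ℂ) = ((A/Real.pi : ℝ):ℂ) * w := by
      rw [mul_inv_eq_iff_eq_mul₀ hw0] at h2
      rw [h2, mul_comm]
    have h5 := congrArg Complex.re h4
    simp only [Complex.ofReal_re, Complex.mul_re, Complex.ofReal_im, zero_mul, sub_zero] at h5
    have h6 : w.re = γ * Real.pi / A := by
      rw [h5]
      field_simp
    rw [h6] at hwre
    exact lt_irrefl _ hwre
  · -- reflection positive
    apply pow_pos
    apply div_pos (mul_pos hγ _)
    · rw [h2r]; positivity
    · rw [norm_inv]
      exact inv_pos.mpr hwapos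
  · -- reflection < 1
    have hlt : γ * ‖w⁻¹‖ / (2 * |ω' k / (2 * Real.pi)|) < 1 := by
      rw [h2r, norm_inv, div_lt_one (by positivity : (0:ℝ) < A/Real.pi), ← div_eq_mul_inv,
        div_lt_div_iff₀ hwapos hπ]
      have h6 : γ * Real.pi < ‖w‖ * A := (div_lt_iff₀ hA).mp hwa
      linarith
    have hnn : 0 ≤ γ * ‖w⁻¹‖ / (2 * |ω' k / (2 * Real.pi)|) := by
      rw [h2r]
      positivity
    calc (γ * ‖w⁻¹‖ / (2 * |ω' k / (2 * Real.pi)|))^2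
        ≤ (γ * ‖w⁻¹‖ / (2 * |ω' k / (2 * Real.pi)|)) * 1 := by
          rw [pow_two]; exact mul_le_mul_of_nonneg_left hlt.le hnn
      _ < 1 := by rw [mul_one]; exact hlt
end

section
/- Let ω : [-1/2,1/2] → ℝ be even and continuous with ω(0) = 0, ω(ℓ) > 0 for ℓ ≠ 0, and suppose ω(ℓ)/ℓ → a for some a > 0 as ℓ → 0+. Then ∫_{-1/2}^{1/2} ε/(ε² + ω(ℓ)²) dℓ converges to π/a as ε → 0+. -/
open Real Filter MeasureTheory Set

lemma arctan_int (ε c r : ℝ) (hε : 0 < ε) (hc : 0 < c) :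
    ∫ ℓ in (0:ℝ)..r, ε / (ε ^ 2 + (c * ℓ) ^ 2) = (1 / c) * Real.arctan (c * r / ε) := by
  have hk : c / ε ≠ 0 := by positivity
  have h1 : ∀ ℓ : ℝ, ε / (ε ^ 2 + (c * ℓ) ^ 2)
      = (1 / ε) * (1 / (1 + (ℓ * (c / ε)) ^ 2)) := by
    intro ℓ
    have hε2 : (0:ℝ) < ε ^ 2 + (c * ℓ) ^ 2 := by positivity
    field_simp
  simp only [h1]
  rw [intervalIntegral.integral_const_mul,
    intervalIntegral.integral_comp_mul_right (fun x => 1 / (1 + x ^ 2)) hk,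
    integral_one_div_one_add_sq]
  rw [zero_mul, Real.arctan_zero, sub_zero, smul_eq_mul]
  have : r * (c / ε) = c * r / ε := by ring
  rw [this]
  field_simp

lemma arctan_tendsto (k : ℝ) (hk : 0 < k) :
    Tendsto (fun ε : ℝ => Real.arctan (k / ε)) (nhdsWithin 0 (Set.Ioi 0))
      (nhds (Real.pi / 2)) := by
  have h1 : Tendsto (fun ε : ℝ => k / ε) (nhdsWithin 0 (Set.Ioi 0)) atTop := by
    simpa [div_eq_mul_inv] using tendsto_inv_nhdsGT_zero.const_mul_atTop hk
  exact (Real.tendsto_arctan_atTop.mono_right nhdsWithin_le_nhds).comp h1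

lemma extract_r {p : ℝ → Prop} (h : ∀ᶠ ℓ in nhdsWithin (0:ℝ) (Set.Ioi 0), p ℓ) :
    ∃ r : ℝ, 0 < r ∧ r ≤ 1/2 ∧ ∀ ℓ : ℝ, 0 < ℓ → ℓ ≤ r → p ℓ := by
  obtain ⟨δ, hδ, hsub⟩ := Metric.mem_nhdsWithin_iff.mp h
  refine ⟨min (δ/2) (1/2), by positivity, min_le_right _ _, ?_⟩
  intro ℓ hℓ hle
  apply hsub
  refine ⟨?_, hℓ⟩
  simp only [Metric.mem_ball, Real.dist_eq, sub_zero, abs_of_pos hℓ]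
  have := min_le_left (δ/2) (1/2)
  linarith

/-- For an even continuous acoustic dispersion relation with `ω(ℓ)/ℓ → a > 0`
as `ℓ → 0+`, we have `∫_{-1/2}^{1/2} ε/(ε² + ω(ℓ)²) dℓ → π/a` as `ε → 0+`. -/
theorem stmt9 (ω : ℝ → ℝ) (a : ℝ) (ha : 0 < a)
    (hcont : ContinuousOn ω (Set.Icc (-(1/2):ℝ) (1/2)))
    (heven : ∀ ℓ ∈ Set.Icc (-(1/2):ℝ) (1/2), ω (-ℓ) = ω ℓ)
    (hzero : ω 0 = 0)
    (hpos : ∀ ℓ ∈ Set.Icc (-(1/2):ℝ) (1/2), ℓ ≠ 0 → 0 < ω ℓ)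
    (hslope : Filter.Tendsto (fun ℓ : ℝ => ω ℓ / ℓ) (nhdsWithin 0 (Set.Ioi 0)) (nhds a)) :
    Filter.Tendsto
      (fun ε : ℝ => ∫ ℓ in (-(1/2):ℝ)..(1/2), ε / (ε ^ 2 + ω ℓ ^ 2))
      (nhdsWithin 0 (Set.Ioi 0)) (nhds (Real.pi / a)) := by
  -- integrability of the integrand on subintervals of [-1/2,1/2]
  have hig : ∀ ε : ℝ, 0 < ε → ∀ p q : ℝ, Set.uIcc p q ⊆ Set.Icc (-(1/2):ℝ) (1/2) →
      IntervalIntegrable (fun ℓ => ε / (ε ^ 2 + ω ℓ ^ 2)) volume p q := by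
    intro ε hε p q hpq
    apply ContinuousOn.intervalIntegrable
    refine ContinuousOn.div continuousOn_const
      (continuousOn_const.add ((hcont.mono hpq).pow 2)) ?_
    intro x hx
    have : (0:ℝ) < ε ^ 2 + ω x ^ 2 := by positivity
    exact ne_of_gt this
  -- integrability of comparison functions
  have higc : ∀ ε : ℝ, 0 < ε → ∀ c : ℝ, 0 < c → ∀ p q : ℝ,
      IntervalIntegrable (fun ℓ => ε / (ε ^ 2 + (c * ℓ) ^ 2)) volume p q := by
    intro ε hε c hc p q
    apply Continuous.intervalIntegrable
    refine Continuous.div continuous_const (by continuity) ?_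
    intro x
    have : (0:ℝ) < ε ^ 2 + (c * x) ^ 2 := by positivity
    exact ne_of_gt this
  -- evenness reduction
  have heq : ∀ ε : ℝ, 0 < ε →
      (∫ ℓ in (-(1/2):ℝ)..(1/2), ε / (ε ^ 2 + ω ℓ ^ 2))
        = 2 * ∫ ℓ in (0:ℝ)..(1/2), ε / (ε ^ 2 + ω ℓ ^ 2) := by
    intro ε hε
    have i1 := hig ε hε (-(1/2)) 0 (by
      rw [Set.uIcc_of_le (by norm_num : (-(1/2):ℝ) ≤ 0)]
      exact Set.Icc_subset_Icc le_rfl (by norm_num))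
    have i2 := hig ε hε 0 (1/2) (by
      rw [Set.uIcc_of_le (by norm_num : (0:ℝ) ≤ 1/2)]
      exact Set.Icc_subset_Icc (by norm_num) le_rfl)
    have hadd := intervalIntegral.integral_add_adjacent_intervals i1 i2
    have hneg : (∫ ℓ in (0:ℝ)..(1/2), ε / (ε ^ 2 + ω (-ℓ) ^ 2))
        = ∫ ℓ in (-(1/2):ℝ)..(-0:ℝ), ε / (ε ^ 2 + ω ℓ ^ 2) :=
      intervalIntegral.integral_comp_neg (fun ℓ => ε / (ε ^ 2 + ω ℓ ^ 2))
    rw [neg_zero] at hneg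
    have hcongr : (∫ ℓ in (0:ℝ)..(1/2), ε / (ε ^ 2 + ω (-ℓ) ^ 2))
        = ∫ ℓ in (0:ℝ)..(1/2), ε / (ε ^ 2 + ω ℓ ^ 2) := by
      apply intervalIntegral.integral_congr
      intro x hx
      rw [Set.uIcc_of_le (by norm_num : (0:ℝ) ≤ 1/2)] at hx
      show ε / (ε ^ 2 + ω (-x) ^ 2) = ε / (ε ^ 2 + ω x ^ 2)
      rw [heven x ⟨by linarith [hx.1], hx.2⟩]
    linarith
  -- it suffices to handle 2 * ∫_0^{1/2}
  have hmain : Tendsto (fun ε : ℝ => 2 * ∫ ℓ in (0:ℝ)..(1/2), ε / (ε ^ 2 + ω ℓ ^ 2))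
      (nhdsWithin 0 (Set.Ioi 0)) (nhds (Real.pi / a)) := by
    rw [tendsto_order]
    constructor
    · -- lower bound
      intro x hx
      -- choose c > a with x < π / c
      have hπa : 0 < Real.pi / a := by positivity
      set x' := max x (Real.pi / (2 * a)) with hx'def
      have hx'pos : 0 < x' := lt_of_lt_of_le (by positivity) (le_max_right _ _)
      have hx'lt : x' < Real.pi / a := by
        apply max_lt hx
        rw [div_lt_div_iff₀ (by positivity) ha]
        nlinarith [Real.pi_pos]
      obtain ⟨y, hy1, hy2⟩ := exists_between hx'lt
      have hypos : 0 < y := lt_trans hx'pos hy1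
      set c := Real.pi / y with hcdef
      have hcpos : 0 < c := by positivity
      have hca : a < c := by
        rw [hcdef, lt_div_iff₀ hypos]
        have := (lt_div_iff₀ ha).mp hy2
        linarith
      have hπc : Real.pi / c = y := by
        rw [hcdef]; field_simp
      -- r such that ω ℓ ≤ c ℓ on (0, r]
      have hev : ∀ᶠ ℓ in nhdsWithin (0:ℝ) (Set.Ioi 0), ω ℓ / ℓ < c :=
        hslope.eventually_lt_const hca
      obtain ⟨r, hr0, hr12, hrprop⟩ := extract_r hev
      have hωle : ∀ ℓ : ℝ, 0 < ℓ → ℓ ≤ r → ω ℓ ≤ c * ℓ := by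
        intro ℓ h1 h2
        have := hrprop ℓ h1 h2
        rw [div_lt_iff₀ h1] at this
        linarith
      -- lower bound for the integral, for every ε > 0
      have key : ∀ ε : ℝ, 0 < ε →
          2 * ((1/c) * Real.arctan (c * r / ε))
            ≤ 2 * ∫ ℓ in (0:ℝ)..(1/2), ε / (ε ^ 2 + ω ℓ ^ 2) := by
        intro ε hε
        have hsub0r : Set.uIcc (0:ℝ) r ⊆ Set.Icc (-(1/2):ℝ) (1/2) := by
          rw [Set.uIcc_of_le hr0.le]
          exact Set.Icc_subset_Icc (by norm_num) hr12
        have hsubr : Set.uIcc r (1/2:ℝ) ⊆ Set.Icc (-(1/2):ℝ) (1/2) := by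
          rw [Set.uIcc_of_le hr12]
          exact Set.Icc_subset_Icc (by linarith) le_rfl
        have hsplit := intervalIntegral.integral_add_adjacent_intervals
          (hig ε hε 0 r hsub0r) (hig ε hε r (1/2) hsubr)
        have h1 : (∫ ℓ in (0:ℝ)..r, ε / (ε ^ 2 + (c * ℓ) ^ 2))
            ≤ ∫ ℓ in (0:ℝ)..r, ε / (ε ^ 2 + ω ℓ ^ 2) := by
          apply intervalIntegral.integral_mono_on hr0.le
            (higc ε hε c hcpos 0 r) (hig ε hε 0 r hsub0r)
          intro ℓ hℓ
          rcases eq_or_lt_of_le hℓ.1 with h0 | h0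
          · rw [← h0, hzero, mul_zero]
          · have hω0 : 0 ≤ ω ℓ :=
              (hpos ℓ ⟨by linarith, le_trans hℓ.2 hr12⟩ (ne_of_gt h0)).le
            have : ω ℓ ^ 2 ≤ (c * ℓ) ^ 2 :=
              pow_le_pow_left₀ hω0 (hωle ℓ h0 hℓ.2) 2
            gcongr
        have h2 : (0:ℝ) ≤ ∫ ℓ in r..(1/2:ℝ), ε / (ε ^ 2 + ω ℓ ^ 2) := by
          apply intervalIntegral.integral_nonneg hr12
          intro u hu
          positivity
        rw [← arctan_int ε c r hε hcpos]
        linarith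
      -- the arctan lower bound tends to π/c = y > x
      have hT : Tendsto (fun ε : ℝ => 2 * ((1/c) * Real.arctan (c * r / ε)))
          (nhdsWithin 0 (Set.Ioi 0)) (nhds (Real.pi / c)) := by
        have := (arctan_tendsto (c * r) (by positivity)).const_mul (1/c)
        have h2 := this.const_mul 2
        convert h2 using 2
        field_simp
      have hx_lt : x < Real.pi / c := by rw [hπc]; exact lt_of_le_of_lt (le_max_left _ _) hy1
      filter_upwards [hT.eventually_const_lt hx_lt, eventually_mem_nhdsWithin] with ε h1 h2
      exact lt_of_lt_of_le h1 (key ε h2)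
    · -- upper bound
      intro x hx
      obtain ⟨y, hy1, hy2⟩ := exists_between hx
      have hypos : 0 < y := lt_trans (by positivity) hy1
      set b := Real.pi / y with hbdef
      have hbpos : 0 < b := by positivity
      have hba : b < a := by
        rw [hbdef, div_lt_iff₀ hypos]
        have := (div_lt_iff₀ ha).mp hy1
        linarith
      have hπb : Real.pi / b = y := by rw [hbdef]; field_simp
      have hev : ∀ᶠ ℓ in nhdsWithin (0:ℝ) (Set.Ioi 0), b < ω ℓ / ℓ :=
        hslope.eventually_const_lt hba
      obtain ⟨r, hr0, hr12, hrprop⟩ := extract_r hev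
      have hωge : ∀ ℓ : ℝ, 0 < ℓ → ℓ ≤ r → b * ℓ ≤ ω ℓ := by
        intro ℓ h1 h2
        have := hrprop ℓ h1 h2
        rw [lt_div_iff₀ h1] at this
        linarith
      -- minimum of ω on [r, 1/2]
      obtain ⟨ℓ0, hℓ0mem, hmin⟩ := isCompact_Icc.exists_isMinOn
        (Set.nonempty_Icc.2 hr12)
        (hcont.mono (Set.Icc_subset_Icc (by linarith) le_rfl))
      set m := ω ℓ0 with hmdef
      have hm : 0 < m :=
        hpos ℓ0 ⟨by linarith [hℓ0mem.1], hℓ0mem.2⟩ (ne_of_gt (lt_of_lt_of_le hr0 hℓ0mem.1))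
      have key : ∀ ε : ℝ, 0 < ε →
          2 * ∫ ℓ in (0:ℝ)..(1/2), ε / (ε ^ 2 + ω ℓ ^ 2)
            ≤ 2 * ((1/b) * Real.arctan (b * r / ε)) + 2 * ((1/2 - r) * (ε / m ^ 2)) := by
        intro ε hε
        have hsub0r : Set.uIcc (0:ℝ) r ⊆ Set.Icc (-(1/2):ℝ) (1/2) := by
          rw [Set.uIcc_of_le hr0.le]
          exact Set.Icc_subset_Icc (by norm_num) hr12
        have hsubr : Set.uIcc r (1/2:ℝ) ⊆ Set.Icc (-(1/2):ℝ) (1/2) := by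
          rw [Set.uIcc_of_le hr12]
          exact Set.Icc_subset_Icc (by linarith) le_rfl
        have hsplit := intervalIntegral.integral_add_adjacent_intervals
          (hig ε hε 0 r hsub0r) (hig ε hε r (1/2) hsubr)
        have h1 : (∫ ℓ in (0:ℝ)..r, ε / (ε ^ 2 + ω ℓ ^ 2))
            ≤ ∫ ℓ in (0:ℝ)..r, ε / (ε ^ 2 + (b * ℓ) ^ 2) := by
          apply intervalIntegral.integral_mono_on hr0.le
            (hig ε hε 0 r hsub0r) (higc ε hε b hbpos 0 r)
          intro ℓ hℓ
          rcases eq_or_lt_of_le hℓ.1 with h0 | h0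
          · rw [← h0, hzero, mul_zero]
          · have : (b * ℓ) ^ 2 ≤ ω ℓ ^ 2 :=
              pow_le_pow_left₀ (by positivity) (hωge ℓ h0 hℓ.2) 2
            gcongr
        have h2 : (∫ ℓ in r..(1/2:ℝ), ε / (ε ^ 2 + ω ℓ ^ 2))
            ≤ (1/2 - r) * (ε / m ^ 2) := by
          have hc : (∫ _ in r..(1/2:ℝ), ε / m ^ 2) = (1/2 - r) * (ε / m ^ 2) := by
            rw [intervalIntegral.integral_const, smul_eq_mul]
          rw [← hc]
          apply intervalIntegral.integral_mono_on hr12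
            (hig ε hε r (1/2) hsubr) intervalIntegrable_const
          intro ℓ hℓ
          have hmω : m ≤ ω ℓ := hmin hℓ
          have hsq : m ^ 2 ≤ ε ^ 2 + ω ℓ ^ 2 := by nlinarith
          rw [div_le_div_iff₀ (by positivity) (by positivity)]
          nlinarith
        rw [← arctan_int ε b r hε hbpos]
        linarith
      -- the upper bound tends to π/b = y < x
      have hT1 : Tendsto (fun ε : ℝ => 2 * ((1/b) * Real.arctan (b * r / ε)))
          (nhdsWithin 0 (Set.Ioi 0)) (nhds (Real.pi / b)) := by
        have := ((arctan_tendsto (b * r) (by positivity)).const_mul (1/b)).const_mul 2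
        convert this using 2
        field_simp
      have hT2 : Tendsto (fun ε : ℝ => 2 * ((1/2 - r) * (ε / m ^ 2)))
          (nhdsWithin 0 (Set.Ioi 0)) (nhds 0) := by
        have hcts : Continuous (fun ε : ℝ => 2 * ((1/2 - r) * (ε / m ^ 2))) :=
          continuous_const.mul (continuous_const.mul (continuous_id.div_const _))
        have h0 := (hcts.tendsto 0).mono_left (nhdsWithin_le_nhds (s := Set.Ioi 0))
        simpa using h0
      have hT := hT1.add hT2
      rw [add_zero] at hT
      have hyx : Real.pi / b < x := by rw [hπb]; exact hy2
      filter_upwards [hT.eventually_lt_const hyx, eventually_mem_nhdsWithin] with ε h1 h2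
      exact lt_of_le_of_lt (key ε h2) h1
  apply hmain.congr'
  filter_upwards [eventually_mem_nhdsWithin] with ε hε
  exact (heq ε hε).symm
end

section
/- Let ω₀ ≥ 0, ω_a > 0, let k ∈ (0,1/2), and set ω_k := √(ω₀²/2 + ω_a²·sin²(πk)). Then the complex integral ∫_{-1/2}^{1/2} (ε − i·ω_k)/((ε − i·ω_k)² + ω₀²/2 + ω_a²·sin²(πℓ)) dℓ converges, as ε → 0+, to the real number 2ω_k/(ω_a²·sin(2πk)). -/
open Complex Real

noncomputable def mysqrt (z : ℂ) : ℂ :=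
  (Real.sqrt ((‖z‖ + z.re)/2) : ℝ) - Complex.I * (Real.sqrt ((‖z‖ - z.re)/2) : ℝ)

lemma mysqrt_re (z : ℂ) : (mysqrt z).re = Real.sqrt ((‖z‖ + z.re)/2) := by
  simp [mysqrt]

lemma mysqrt_im (z : ℂ) : (mysqrt z).im = - Real.sqrt ((‖z‖ - z.re)/2) := by
  simp [mysqrt]

lemma mysqrt_sq {z : ℂ} (hz : z.im ≤ 0) : mysqrt z ^ 2 = z := by
  have hre := Complex.abs_re_le_norm z
  have h1 : 0 ≤ (‖z‖ + z.re)/2 := by linarith [(abs_le.mp hre).1]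
  have h2 : 0 ≤ (‖z‖ - z.re)/2 := by linarith [(abs_le.mp hre).2]
  have key : Real.sqrt ((‖z‖ + z.re)/2) * Real.sqrt ((‖z‖ - z.re)/2) = -z.im / 2 := by
    rw [← Real.sqrt_mul h1]
    have h3 : (‖z‖ + z.re) / 2 * ((‖z‖ - z.re) / 2) = (-z.im/2)^2 := by
      have := Complex.sq_norm z
      rw [Complex.normSq_apply] at this
      nlinarith
    rw [h3]
    exact Real.sqrt_sq (by linarith)
  have hp := Real.mul_self_sqrt h1
  have hq := Real.mul_self_sqrt h2
  apply Complex.ext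
  · simp only [pow_two, Complex.mul_re, mysqrt_re, mysqrt_im]
    linear_combination hp - hq
  · simp only [pow_two, Complex.mul_im, mysqrt_re, mysqrt_im]
    linear_combination (-2 : ℝ) * key

lemma mysqrt_re_pos {z : ℂ} (hz : z.im < 0) : 0 < (mysqrt z).re := by
  rw [mysqrt_re]
  apply Real.sqrt_pos.mpr
  have h : |z.re| < ‖z‖ := Complex.abs_re_lt_norm.mpr (by exact ne_of_lt hz)
  cases abs_lt.mp h with
  | intro h1 h2 => linarith

lemma mysqrt_im_neg {z : ℂ} (hz : z.im < 0) : (mysqrt z).im < 0 := by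
  rw [mysqrt_im, neg_lt, neg_zero]
  apply Real.sqrt_pos.mpr
  have h : |z.re| < ‖z‖ := Complex.abs_re_lt_norm.mpr (by exact ne_of_lt hz)
  cases abs_lt.mp h with
  | intro h1 h2 => linarith

lemma continuous_mysqrt : Continuous mysqrt := by
  unfold mysqrt
  exact ((Complex.continuous_ofReal.comp ((continuous_norm.add Complex.continuous_re).div_const 2).sqrt)).sub
    (continuous_const.mul (Complex.continuous_ofReal.comp ((continuous_norm.sub Complex.continuous_re).div_const 2).sqrt))

lemma abs_sub_lt_abs_add {u v : ℂ} (h : 0 < u.re * v.re + u.im * v.im) :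
    ‖u - v‖ < ‖u + v‖ := by
  rw [Complex.norm_def, Complex.norm_def]
  apply Real.sqrt_lt_sqrt (Complex.normSq_nonneg _)
  simp only [Complex.normSq_apply, Complex.sub_re, Complex.sub_im, Complex.add_re, Complex.add_im]
  nlinarith


lemma sumterm (z₁ z₂ e : ℂ) (he2 : e^2 ≠ 0)
    (hprod : z₁ * z₂ = 1)
    (h1 : 1 - z₁ * (e^2)⁻¹ ≠ 0) (h2 : 1 - z₁ * e^2 ≠ 0)
    (h3 : e^2 - z₁ ≠ 0) (h4 : e^2 - z₂ ≠ 0) :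
    1 + z₁ * (e^2)⁻¹ / (1 - z₁*(e^2)⁻¹) + z₁ * e^2 / (1 - z₁*e^2)
      = e^2*(z₁ - z₂) / ((e^2 - z₁)*(e^2 - z₂)) := by
  have he : e ≠ 0 := by rintro rfl; simp at he2
  field_simp
  linear_combination (e^2*z₁-e^4) * hprod

lemma facterm (lam a b z₁ z₂ e : ℂ) (hb : b ≠ 0) (he2 : e^2 ≠ 0)
    (hprod : z₁ * z₂ = 1) (hsum : b * (z₁ + z₂) = 4*(lam^2 + a) + 2*b) :
    lam^2+a+b*(2-e^2-(e^2)⁻¹)/4 = -(b*(e^2-z₁)*(e^2-z₂))/(4*e^2) := by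
  have he : e ≠ 0 := by rintro rfl; simp at he2
  field_simp
  linear_combination (-e^2)*hsum + b*hprod

lemma deriv_identity (lam a b z₁ z₂ e : ℂ) (hb : b ≠ 0) (he2 : e^2 ≠ 0)
    (hprod : z₁ * z₂ = 1) (hsum : b * (z₁ + z₂) = 4*(lam^2 + a) + 2*b)
    (hz : z₂ - z₁ ≠ 0)
    (h1 : 1 - z₁ * (e^2)⁻¹ ≠ 0) (h2 : 1 - z₁ * e^2 ≠ 0)
    (h3 : e^2 - z₁ ≠ 0) (h4 : e^2 - z₂ ≠ 0) :
    (4*lam/(b*(z₂-z₁))) * (1 + z₁ * (e^2)⁻¹ / (1 - z₁*(e^2)⁻¹) + z₁ * e^2 / (1 - z₁*e^2))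
      = lam / (lam^2 + a + b * (2 - e^2 - (e^2)⁻¹)/4) := by
  rw [sumterm z₁ z₂ e he2 hprod h1 h2 h3 h4, facterm lam a b z₁ z₂ e hb he2 hprod hsum]
  field_simp
  ring


lemma mysqrt_ofReal_nonpos {x : ℝ} (hx : x ≤ 0) : mysqrt (x:ℂ) = -Complex.I*((Real.sqrt (-x) : ℝ):ℂ) := by
  unfold mysqrt
  rw [Complex.norm_real, Real.norm_eq_abs, Complex.ofReal_re, _root_.abs_of_nonpos hx]
  rw [show (-x + x)/2 = 0 by ring, show (-x - x)/2 = -x by ring, Real.sqrt_zero]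
  push_cast
  ring

lemma mysqrt_ofReal_nonneg {x : ℝ} (hx : 0 ≤ x) : mysqrt (x:ℂ) = ((Real.sqrt x : ℝ):ℂ) := by
  unfold mysqrt
  rw [Complex.norm_real, Real.norm_eq_abs, Complex.ofReal_re, _root_.abs_of_nonneg hx]
  rw [show (x + x)/2 = x by ring, show (x - x)/2 = 0 by ring, Real.sqrt_zero]
  push_cast
  ring

/-- `wfun a b ωk ε = u₁ * u₂` where `u₁ = mysqrt(S-2)`, `u₂ = mysqrt(S+2)`. -/
noncomputable def wfun (a b ωk ε : ℝ) : ℂ :=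
  mysqrt ((((4/b):ℝ):ℂ) * (((ε:ℂ) - Complex.I*(ωk:ℝ))^2 + (a:ℝ))) *
  mysqrt ((((4/b):ℝ):ℂ) * (((ε:ℂ) - Complex.I*(ωk:ℝ))^2 + (a:ℝ)) + 4)

set_option maxHeartbeats 1000000 in
lemma key (a b ωk : ℝ) (hb : 0 < b) (hωk : 0 < ωk) (ε : ℝ) (hε : 0 < ε) :
    (∫ ℓ in (-(1/2):ℝ)..(1/2),
      ((ε : ℂ) - Complex.I * (ωk : ℝ)) /
        (((ε : ℂ) - Complex.I * (ωk : ℝ)) ^ 2 + ((a + b * Real.sin (Real.pi * ℓ) ^ 2 : ℝ) : ℂ)))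
      = 4*((ε:ℂ) - Complex.I*(ωk:ℝ))/((b:ℝ) * wfun a b ωk ε) := by
  set lam : ℂ := (ε:ℂ) - Complex.I*(ωk:ℝ) with hlam
  set A : ℂ := lam^2 + (a:ℝ) with hA
  set u₁ : ℂ := mysqrt ((((4/b):ℝ):ℂ) * A) with hu₁
  set u₂ : ℂ := mysqrt ((((4/b):ℝ):ℂ) * A + 4) with hu₂
  set z₁ : ℂ := ((u₁ - u₂)/2)^2 with hz₁
  set z₂ : ℂ := ((u₁ + u₂)/2)^2 with hz₂
  have hlamim : lam.im = -ωk := by simp [hlam]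
  have hlamre : lam.re = ε := by simp [hlam]
  have him2 : (lam^2).im = -(2*ε*ωk) := by
    rw [pow_two, Complex.mul_im, hlamim, hlamre]; ring
  have hAim : A.im = -(2*ε*ωk) := by simp [hA, him2]
  have hAimneg : A.im < 0 := by rw [hAim]; nlinarith
  have hS2im : ((((4/b):ℝ):ℂ) * A).im < 0 := by
    have : ((((4/b):ℝ):ℂ) * A).im = (4/b) * A.im := by simp
    rw [this]
    have : 0 < 4/b := by positivity
    nlinarith
  have hS2im' : ((((4/b):ℝ):ℂ) * A + 4).im < 0 := by
    have : ((((4/b):ℝ):ℂ) * A + 4).im = ((((4/b):ℝ):ℂ) * A).im := by simp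
    rw [this]; exact hS2im
  have hu₁sq : u₁^2 = (((4/b):ℝ):ℂ) * A := mysqrt_sq (le_of_lt hS2im)
  have hu₂sq : u₂^2 = (((4/b):ℝ):ℂ) * A + 4 := mysqrt_sq (le_of_lt hS2im')
  have hre₁ : 0 < u₁.re := mysqrt_re_pos hS2im
  have hre₂ : 0 < u₂.re := mysqrt_re_pos hS2im'
  have him₁ : u₁.im < 0 := mysqrt_im_neg hS2im
  have him₂ : u₂.im < 0 := mysqrt_im_neg hS2im'
  have hbC : ((b:ℝ):ℂ) ≠ 0 := by exact_mod_cast ne_of_gt hb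
  have hprod : z₁ * z₂ = 1 := by
    have h12 : u₁^2 - u₂^2 = -4 := by rw [hu₁sq, hu₂sq]; ring
    have : z₁ * z₂ = ((u₁^2 - u₂^2)/4)^2 := by rw [hz₁, hz₂]; ring
    rw [this, h12]; norm_num
  have hsum : ((b:ℝ):ℂ) * (z₁ + z₂) = 4*(lam^2 + (a:ℝ)) + 2*(b:ℝ) := by
    have : z₁ + z₂ = (u₁^2 + u₂^2)/2 := by rw [hz₁, hz₂]; ring
    rw [this, hu₁sq, hu₂sq, ← hA]
    push_cast
    field_simp
    ring
  have habs12 : ‖u₁ - u₂‖ < ‖u₁ + u₂‖ := by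
    apply abs_sub_lt_abs_add
    have : 0 < u₁.im * u₂.im := mul_pos_of_neg_of_neg him₁ him₂
    nlinarith
  have habsz₁ : ‖z₁‖ < 1 := by
    have h1 : ‖z₁‖ = (‖u₁ - u₂‖/2)^2 := by
      rw [hz₁]; rw [norm_pow, norm_div]; norm_num
    have h2 : ‖z₂‖ = (‖u₁ + u₂‖/2)^2 := by
      rw [hz₂]; rw [norm_pow, norm_div]; norm_num
    have h3 : ‖z₁‖ * ‖z₂‖ = 1 := by
      rw [← norm_mul, hprod, norm_one]
    nlinarith [norm_nonneg (u₁ - u₂), norm_nonneg (u₁ + u₂), norm_nonneg z₁, norm_nonneg z₂]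
  have habsz₂ : 1 < ‖z₂‖ := by
    have h3 : ‖z₁‖ * ‖z₂‖ = 1 := by
      rw [← norm_mul, hprod, norm_one]
    nlinarith [norm_nonneg z₁, norm_nonneg z₂]
  have hwz : z₂ - z₁ = u₁ * u₂ := by rw [hz₁, hz₂]; ring
  have hu₁ne : u₁ ≠ 0 := fun h => by rw [h] at hre₁; simp at hre₁
  have hu₂ne : u₂ ≠ 0 := fun h => by rw [h] at hre₂; simp at hre₂
  have hwne : u₁ * u₂ ≠ 0 := mul_ne_zero hu₁ne hu₂ne
  have hπ : ((Real.pi:ℝ):ℂ) ≠ 0 := by exact_mod_cast Real.pi_ne_zero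
  have hDne : ∀ ℓ : ℝ, lam^2 + ((a + b * Real.sin (Real.pi * ℓ) ^ 2 : ℝ) : ℂ) ≠ 0 := by
    intro ℓ h
    have h2 : (lam^2 + ((a + b * Real.sin (Real.pi * ℓ) ^ 2 : ℝ) : ℂ)).im = -(2*ε*ωk) := by
      rw [Complex.add_im, Complex.ofReal_im, him2, add_zero]
    rw [h] at h2
    simp at h2
    rcases h2 with h'|h' <;> linarith
  rw [show wfun a b ωk ε = u₁ * u₂ from rfl]
  clear hu₁ hu₂ hz₁ hz₂ hA habs12 hAim hAimneg hS2im hS2im' hu₁sq hu₂sq hre₁ hre₂ him₁ him₂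
  clear_value u₁ u₂ z₁ z₂ A
  set C : ℂ := 4*lam/(((b:ℝ):ℂ) * (u₁*u₂)) with hCdef
  set Gc : ℂ → ℂ := fun ζ => C * (ζ +
      (Complex.log (1 - z₁ * Complex.exp ((-(2*((Real.pi:ℝ):ℂ)*Complex.I)) * ζ))
        - Complex.log (1 - z₁ * Complex.exp ((2*((Real.pi:ℝ):ℂ)*Complex.I) * ζ)))
      / (2*((Real.pi:ℝ):ℂ)*Complex.I)) with hGc
  have hderiv : ∀ x : ℝ, HasDerivAt (fun y : ℝ => Gc (y:ℂ))
      (lam / (lam^2 + ((a + b * Real.sin (Real.pi * x) ^ 2 : ℝ) : ℂ))) x := by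
    intro x
    set e : ℂ := Complex.exp (((Real.pi:ℝ):ℂ)*(x:ℂ)*Complex.I) with he
    have hene : e ≠ 0 := Complex.exp_ne_zero _
    have he2ne : e^2 ≠ 0 := pow_ne_zero _ hene
    have habse : ‖e‖ = 1 := by
      rw [he, Complex.norm_exp]
      simp
    have habse2 : ‖e^2‖ = 1 := by rw [norm_pow, habse]; norm_num
    have hexpc2 : Complex.exp ((2*((Real.pi:ℝ):ℂ)*Complex.I) * (x:ℂ)) = e^2 := by
      rw [pow_two, ← Complex.exp_add]
      congr 1
      ring
    have hexpc1 : Complex.exp ((-(2*((Real.pi:ℝ):ℂ)*Complex.I)) * (x:ℂ)) = (e^2)⁻¹ := by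
      rw [← hexpc2, ← Complex.exp_neg]
      congr 1
      ring
    have h2 : 1 - z₁ * e^2 ≠ 0 := by
      intro h
      rw [sub_eq_zero] at h
      have : ‖z₁ * e^2‖ = 1 := by rw [← h]; simp
      rw [norm_mul, habse2, mul_one] at this
      linarith
    have h1 : 1 - z₁ * (e^2)⁻¹ ≠ 0 := by
      intro h
      rw [sub_eq_zero] at h
      have : ‖z₁ * (e^2)⁻¹‖ = 1 := by rw [← h]; simp
      rw [norm_mul, norm_inv, habse2] at this
      simp at this
      linarith
    have h3 : e^2 - z₁ ≠ 0 := by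
      intro h
      rw [sub_eq_zero] at h
      rw [← h, habse2] at habsz₁
      linarith
    have h4 : e^2 - z₂ ≠ 0 := by
      intro h
      rw [sub_eq_zero] at h
      rw [← h, habse2] at habsz₂
      linarith
    have m1 : (1 - z₁ * Complex.exp ((-(2*((Real.pi:ℝ):ℂ)*Complex.I)) * (x:ℂ))) ∈ Complex.slitPlane := by
      rw [hexpc1]
      rw [Complex.mem_slitPlane_iff]
      left
      have habs' : ‖z₁ * (e^2)⁻¹‖ = ‖z₁‖ := by
        rw [norm_mul, norm_inv, habse2, inv_one, mul_one]
      have hle := Complex.re_le_norm (z₁ * (e^2)⁻¹)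
      rw [habs'] at hle
      rw [Complex.sub_re, Complex.one_re]
      linarith
    have m2 : (1 - z₁ * Complex.exp ((2*((Real.pi:ℝ):ℂ)*Complex.I) * (x:ℂ))) ∈ Complex.slitPlane := by
      rw [hexpc2]
      rw [Complex.mem_slitPlane_iff]
      left
      have hle : (z₁ * e^2).re ≤ ‖z₁ * e^2‖ := Complex.re_le_norm _
      rw [norm_mul, habse2, mul_one] at hle
      simp only [Complex.sub_re, Complex.one_re]
      linarith
    -- derivative of the inner functions
    have hg1 : HasDerivAt (fun ζ : ℂ => 1 - z₁ * Complex.exp ((-(2*((Real.pi:ℝ):ℂ)*Complex.I)) * ζ))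
        (-(z₁ * (Complex.exp ((-(2*((Real.pi:ℝ):ℂ)*Complex.I)) * (x:ℂ)) * ((-(2*((Real.pi:ℝ):ℂ)*Complex.I)) * 1)))) (x:ℂ) :=
      ((((hasDerivAt_id ((x:ℝ):ℂ)).const_mul (-(2*((Real.pi:ℝ):ℂ)*Complex.I))).cexp).const_mul z₁).const_sub 1
    have hg2 : HasDerivAt (fun ζ : ℂ => 1 - z₁ * Complex.exp ((2*((Real.pi:ℝ):ℂ)*Complex.I) * ζ))
        (-(z₁ * (Complex.exp ((2*((Real.pi:ℝ):ℂ)*Complex.I) * (x:ℂ)) * ((2*((Real.pi:ℝ):ℂ)*Complex.I) * 1)))) (x:ℂ) :=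
      ((((hasDerivAt_id ((x:ℝ):ℂ)).const_mul (2*((Real.pi:ℝ):ℂ)*Complex.I)).cexp).const_mul z₁).const_sub 1
    have hl1 := hg1.clog m1
    have hl2 := hg2.clog m2
    have hGd : HasDerivAt Gc
        (C * (1 + ((-(z₁ * (Complex.exp ((-(2*((Real.pi:ℝ):ℂ)*Complex.I)) * (x:ℂ)) * ((-(2*((Real.pi:ℝ):ℂ)*Complex.I)) * 1))) / (1 - z₁ * Complex.exp ((-(2*((Real.pi:ℝ):ℂ)*Complex.I)) * (x:ℂ)))
          - (-(z₁ * (Complex.exp ((2*((Real.pi:ℝ):ℂ)*Complex.I) * (x:ℂ)) * ((2*((Real.pi:ℝ):ℂ)*Complex.I) * 1)))) / (1 - z₁ * Complex.exp ((2*((Real.pi:ℝ):ℂ)*Complex.I) * (x:ℂ))))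
          / (2*((Real.pi:ℝ):ℂ)*Complex.I)))) (x:ℂ) :=
      ((hasDerivAt_id ((x:ℝ):ℂ)).add ((hl1.sub hl2).div_const _)).const_mul C
    have hval : (C * (1 + ((-(z₁ * (Complex.exp ((-(2*((Real.pi:ℝ):ℂ)*Complex.I)) * (x:ℂ)) * ((-(2*((Real.pi:ℝ):ℂ)*Complex.I)) * 1))) / (1 - z₁ * Complex.exp ((-(2*((Real.pi:ℝ):ℂ)*Complex.I)) * (x:ℂ)))
          - (-(z₁ * (Complex.exp ((2*((Real.pi:ℝ):ℂ)*Complex.I) * (x:ℂ)) * ((2*((Real.pi:ℝ):ℂ)*Complex.I) * 1)))) / (1 - z₁ * Complex.exp ((2*((Real.pi:ℝ):ℂ)*Complex.I) * (x:ℂ))))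
          / (2*((Real.pi:ℝ):ℂ)*Complex.I))))
        = lam / (lam^2 + ((a + b * Real.sin (Real.pi * x) ^ 2 : ℝ) : ℂ)) := by
      rw [hexpc1, hexpc2]
      have step1 : (C * (1 + ((-(z₁ * ((e^2)⁻¹ * ((-(2*((Real.pi:ℝ):ℂ)*Complex.I)) * 1))) / (1 - z₁ * (e^2)⁻¹)
          - (-(z₁ * (e^2 * ((2*((Real.pi:ℝ):ℂ)*Complex.I) * 1)))) / (1 - z₁ * e^2))
          / (2*((Real.pi:ℝ):ℂ)*Complex.I))))
          = C * (1 + z₁ * (e^2)⁻¹ / (1 - z₁*(e^2)⁻¹) + z₁ * e^2 / (1 - z₁*e^2)) := by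
        have : ((-(z₁ * ((e^2)⁻¹ * ((-(2*((Real.pi:ℝ):ℂ)*Complex.I)) * 1))) / (1 - z₁ * (e^2)⁻¹)
          - (-(z₁ * (e^2 * ((2*((Real.pi:ℝ):ℂ)*Complex.I) * 1)))) / (1 - z₁ * e^2))
          / (2*((Real.pi:ℝ):ℂ)*Complex.I))
            = z₁ * (e^2)⁻¹ / (1 - z₁*(e^2)⁻¹) + z₁ * e^2 / (1 - z₁*e^2) := by
          field_simp
          ring
        rw [this]
        ring
      rw [step1]
      have hCform : C = 4*lam/(((b:ℝ):ℂ)*(z₂ - z₁)) := by rw [hCdef, hwz]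
      rw [hCform]
      rw [deriv_identity lam ((a:ℝ):ℂ) (((b:ℝ)):ℂ) z₁ z₂ e hbC he2ne hprod hsum (by rw [hwz]; exact hwne) h1 h2 h3 h4]
      congr 1
      -- denominators agree
      have hcos : Complex.cos (2*(((Real.pi:ℝ):ℂ)*(x:ℂ))) = (e^2 + (e^2)⁻¹)/2 := by
        rw [Complex.cos]
        rw [show (2*(((Real.pi:ℝ):ℂ)*(x:ℂ)))*Complex.I = (((Real.pi:ℝ):ℂ)*(x:ℂ)*Complex.I) + (((Real.pi:ℝ):ℂ)*(x:ℂ)*Complex.I) by ring]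
        rw [show (-(2*(((Real.pi:ℝ):ℂ)*(x:ℂ)))*Complex.I) = -((((Real.pi:ℝ):ℂ)*(x:ℂ)*Complex.I) + (((Real.pi:ℝ):ℂ)*(x:ℂ)*Complex.I)) by ring]
        rw [Complex.exp_neg, Complex.exp_add, ← he, ← pow_two]
      have hcos2 := Complex.cos_two_mul (((Real.pi:ℝ):ℂ)*(x:ℂ))
      have hpyth := Complex.sin_sq_add_cos_sq (((Real.pi:ℝ):ℂ)*(x:ℂ))
      have hsin2 : Complex.sin (((Real.pi:ℝ):ℂ)*(x:ℂ))^2 = (2 - e^2 - (e^2)⁻¹)/4 := by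
        linear_combination hpyth + (1/2)*hcos2 - (1/2)*hcos
      push_cast
      rw [hsin2]
      ring
    exact (hval ▸ hGd).comp_ofReal
  have hint : IntervalIntegrable (fun ℓ : ℝ => lam / (lam^2 + ((a + b * Real.sin (Real.pi * ℓ) ^ 2 : ℝ) : ℂ))) MeasureTheory.volume (-(1/2):ℝ) (1/2) := by
    apply Continuous.intervalIntegrable
    apply Continuous.div continuous_const
    · continuity
    · exact hDne
  rw [intervalIntegral.integral_eq_sub_of_hasDerivAt (fun x _ => hderiv x) hint]
  -- endpoint evaluation
  have endpoint : ∀ t : ℝ,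
      Complex.exp ((-(2*((Real.pi:ℝ):ℂ)*Complex.I)) * (t:ℂ)) = -1 →
      Complex.exp ((2*((Real.pi:ℝ):ℂ)*Complex.I) * (t:ℂ)) = -1 →
      Gc (t:ℂ) = C * (t:ℂ) := by
    intro t h1' h2'
    rw [hGc]
    simp only
    rw [h1', h2', sub_self, zero_div, add_zero]
  have hGhalf : Gc (((1:ℝ)/2:ℝ):ℂ) = C * (((1:ℝ)/2:ℝ):ℂ) := by
    apply endpoint
    · rw [show (-(2*((Real.pi:ℝ):ℂ)*Complex.I)) * ((((1:ℝ)/2:ℝ)):ℂ) = -(((Real.pi:ℝ):ℂ)*Complex.I) by push_cast; ring]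
      rw [Complex.exp_neg, Complex.exp_pi_mul_I]
      norm_num
    · rw [show ((2*((Real.pi:ℝ):ℂ)*Complex.I)) * ((((1:ℝ)/2:ℝ)):ℂ) = ((Real.pi:ℝ):ℂ)*Complex.I by push_cast; ring]
      exact Complex.exp_pi_mul_I
  have hGneg : Gc ((-((1:ℝ)/2):ℝ):ℂ) = C * ((-((1:ℝ)/2):ℝ):ℂ) := by
    apply endpoint
    · rw [show (-(2*((Real.pi:ℝ):ℂ)*Complex.I)) * (((-((1:ℝ)/2):ℝ)):ℂ) = ((Real.pi:ℝ):ℂ)*Complex.I by push_cast; ring]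
      exact Complex.exp_pi_mul_I
    · rw [show ((2*((Real.pi:ℝ):ℂ)*Complex.I)) * (((-((1:ℝ)/2):ℝ)):ℂ) = -(((Real.pi:ℝ):ℂ)*Complex.I) by push_cast; ring]
      rw [Complex.exp_neg, Complex.exp_pi_mul_I]
      norm_num
  have hfin : Gc (((1:ℝ)/2:ℝ):ℂ) - Gc ((-((1:ℝ)/2):ℝ):ℂ) = C := by
    rw [hGhalf, hGneg]
    push_cast
    ring
  convert hfin using 2 <;> norm_num


set_option maxHeartbeats 1000000 in
/-- For the nearest-neighbor chain, `J̃(ε - i ω_k)` converges, as `ε → 0+`,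
to `2ω_k/(ω_a² sin(2πk))`, where `ω_k = √(ω₀²/2 + ω_a² sin²(πk))` and `k ∈ (0,1/2)`. -/
theorem stmt11 (ω₀ ωa : ℝ) (hω₀ : 0 ≤ ω₀) (hωa : 0 < ωa) (k : ℝ)
    (hk : k ∈ Set.Ioo (0:ℝ) (1/2)) :
    Filter.Tendsto
      (fun ε : ℝ => ∫ ℓ in (-(1/2):ℝ)..(1/2),
        ((ε : ℂ) - Complex.I * (Real.sqrt (ω₀ ^ 2 / 2 + ωa ^ 2 * Real.sin (Real.pi * k) ^ 2) : ℂ)) /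
          (((ε : ℂ) - Complex.I * (Real.sqrt (ω₀ ^ 2 / 2 + ωa ^ 2 * Real.sin (Real.pi * k) ^ 2) : ℂ)) ^ 2
            + ((ω₀ ^ 2 / 2 + ωa ^ 2 * Real.sin (Real.pi * ℓ) ^ 2 : ℝ) : ℂ)))
      (nhdsWithin 0 (Set.Ioi 0))
      (nhds ((2 * Real.sqrt (ω₀ ^ 2 / 2 + ωa ^ 2 * Real.sin (Real.pi * k) ^ 2)
        / (ωa ^ 2 * Real.sin (2 * Real.pi * k)) : ℝ) : ℂ)) := by
  obtain ⟨hk0, hk2⟩ := hk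
  set a : ℝ := ω₀^2/2 with ha
  set b : ℝ := ωa^2 with hbdef
  set s : ℝ := Real.sin (Real.pi*k) with hsdef
  set c : ℝ := Real.cos (Real.pi*k) with hcdef
  set ωk : ℝ := Real.sqrt (a + b*s^2) with hωkdef
  have hb : 0 < b := by positivity
  have hπ := Real.pi_pos
  have hs : 0 < s := Real.sin_pos_of_pos_of_lt_pi (by positivity) (by nlinarith)
  have hc : 0 < c := Real.cos_pos_of_mem_Ioo ⟨by nlinarith, by nlinarith⟩
  have hge : 0 ≤ a + b*s^2 := by positivity
  have hωk : 0 < ωk := Real.sqrt_pos.mpr (by positivity)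
  have hωk2 : ωk^2 = a + b*s^2 := Real.sq_sqrt hge
  have hEv : (fun ε : ℝ => (4:ℂ)*((ε:ℂ) - Complex.I*(ωk:ℝ))/(((b:ℝ):ℂ) * wfun a b ωk ε))
      =ᶠ[nhdsWithin 0 (Set.Ioi 0)]
      (fun ε : ℝ => ∫ ℓ in (-(1/2):ℝ)..(1/2),
        ((ε : ℂ) - Complex.I * ((ωk:ℝ) : ℂ)) /
          (((ε : ℂ) - Complex.I * ((ωk:ℝ) : ℂ)) ^ 2
            + ((a + b * Real.sin (Real.pi * ℓ) ^ 2 : ℝ) : ℂ))) := by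
    apply Filter.eventuallyEq_of_mem self_mem_nhdsWithin
    intro ε hε
    exact (key a b ωk hb hωk ε hε).symm
  apply Filter.Tendsto.congr' hEv
  -- compute wfun at 0
  have hA0 : (((0:ℝ):ℂ) - Complex.I*((ωk:ℝ):ℂ))^2 + ((a:ℝ):ℂ) = (((a - ωk^2 :ℝ)):ℂ) := by
    push_cast
    linear_combination ((ωk:ℂ)^2) * Complex.I_sq
  have hr1 : (4/b)*(a - ωk^2) = -(4*s^2) := by rw [hωk2]; field_simp; ring
  have hr2 : (4/b)*(a - ωk^2) + 4 = 4*c^2 := by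
    rw [hr1]
    have := Real.sin_sq_add_cos_sq (Real.pi*k)
    rw [← hsdef, ← hcdef] at this
    nlinarith
  have hw0 : wfun a b ωk 0 = (-Complex.I*((2*s:ℝ):ℂ)) * (((2*c:ℝ):ℂ)) := by
    unfold wfun
    rw [hA0]
    rw [show (((4/b:ℝ)):ℂ) * (((a - ωk^2 :ℝ)):ℂ) = (((4/b*(a - ωk^2):ℝ)):ℂ) by push_cast; ring]
    rw [show ((((4/b*(a - ωk^2):ℝ)):ℂ) + 4) = ((((4/b*(a - ωk^2) + 4):ℝ)):ℂ) by push_cast; ring]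
    rw [show (4/b*(a - ωk^2) : ℝ) = ((4/b)*(a - ωk^2) : ℝ) by ring, hr1,
        show (-(4*s^2) + 4 : ℝ) = 4*c^2 by nlinarith [Real.sin_sq_add_cos_sq (Real.pi*k)]]
    rw [mysqrt_ofReal_nonpos (by nlinarith : -(4*s^2) ≤ 0), mysqrt_ofReal_nonneg (by positivity : (0:ℝ) ≤ 4*c^2)]
    rw [show (-(-(4*s^2)) : ℝ) = (2*s)^2 by ring, show (4*c^2 : ℝ) = (2*c)^2 by ring,
        Real.sqrt_sq (by positivity), Real.sqrt_sq (by positivity)]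
  have hprodne : ((b:ℝ):ℂ) * ((-Complex.I*((2*s:ℝ):ℂ)) * (((2*c:ℝ):ℂ))) ≠ 0 := by
    apply mul_ne_zero
    · exact_mod_cast ne_of_gt hb
    apply mul_ne_zero
    · apply mul_ne_zero (neg_ne_zero.mpr Complex.I_ne_zero)
      exact_mod_cast (by positivity : (2*s:ℝ) ≠ 0)
    · exact_mod_cast (by positivity : (2*c:ℝ) ≠ 0)
  have hw0ne : ((b:ℝ):ℂ) * wfun a b ωk 0 ≠ 0 := by rw [hw0]; exact hprodne
  have hwcont : Continuous (fun ε : ℝ => wfun a b ωk ε) := by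
    unfold wfun
    have h1 : Continuous (fun ε : ℝ => (((4/b:ℝ)):ℂ) * (((((ε:ℝ)):ℂ) - Complex.I*((ωk:ℝ):ℂ))^2 + ((a:ℝ):ℂ))) :=
      continuous_const.mul (((Complex.continuous_ofReal.sub continuous_const).pow 2).add continuous_const)
    exact (continuous_mysqrt.comp h1).mul (continuous_mysqrt.comp (h1.add continuous_const))
  have hcont : Filter.Tendsto (fun ε : ℝ => (4:ℂ)*((ε:ℂ) - Complex.I*(ωk:ℝ))/(((b:ℝ):ℂ) * wfun a b ωk ε))
      (nhdsWithin 0 (Set.Ioi 0))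
      (nhds ((4:ℂ)*(((0:ℝ):ℂ) - Complex.I*(ωk:ℝ))/(((b:ℝ):ℂ) * wfun a b ωk 0))) := by
    apply Filter.Tendsto.mono_left _ nhdsWithin_le_nhds
    apply Filter.Tendsto.div
    · have : Continuous (fun ε : ℝ => (4:ℂ)*((ε:ℂ) - Complex.I*(ωk:ℝ))) := by continuity
      exact this.continuousAt
    · exact (continuous_const.mul hwcont).continuousAt
    · exact hw0ne
  have hval : ((2 * ωk / (b * Real.sin (2 * Real.pi * k)) : ℝ) : ℂ)
      = (4:ℂ)*(((0:ℝ):ℂ) - Complex.I*(ωk:ℝ))/(((b:ℝ):ℂ) * wfun a b ωk 0) := by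
    rw [hw0]
    rw [show (2*Real.pi*k) = 2*(Real.pi*k) by ring, Real.sin_two_mul, ← hsdef, ← hcdef]
    have hd1 : ((b * (2*s*c) : ℝ) : ℂ) ≠ 0 := by
      exact_mod_cast (by positivity : (b*(2*s*c):ℝ) ≠ 0)
    rw [show ((2 * ωk / (b * (2*s*c)) : ℝ) : ℂ) = ((2*ωk : ℝ):ℂ) / ((b*(2*s*c):ℝ):ℂ) from by
      push_cast; ring]
    rw [div_eq_div_iff hd1 hprodne]
    push_cast
    ring
  rw [hval]
  exact hcont
end

section
/- Let γ > 0, ω₀ ≥ 0, ω_a > 0, let k ∈ (0,1/2), and set ω_k := √(ω₀²/2 + ω_a²·sin²(πk)). Then the scattering coefficient, i.e. the limit as ε → 0+ of (1 + γ·∫_{-1/2}^{1/2} (ε − i·ω_k)/((ε − i·ω_k)² + ω₀²/2 + ω_a²·sin²(πℓ)) dℓ)⁻¹, exists and equals ν(k) = ω_a²·sin(2πk)/(ω_a²·sin(2πk) + 2γ·√(ω₀²/2 + ω_a²·sin²(πk))). -/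
open Complex Filter Set intervalIntegral MeasureTheory

noncomputable def csqrt (z : ℂ) : ℂ := Complex.exp (Complex.log z / 2)

lemma csqrt_ne_zero (z : ℂ) : csqrt z ≠ 0 := Complex.exp_ne_zero _

lemma csqrt_sq {z : ℂ} (hz : z ≠ 0) : csqrt z ^ 2 = z := by
  rw [csqrt, sq, ← Complex.exp_add, add_halves, Complex.exp_log hz]

lemma csqrt_half_im (z : ℂ) : (Complex.log z / 2).im = z.arg / 2 := by
  simp [Complex.div_im, Complex.log_im]

lemma csqrt_re_pos {z : ℂ} (hz : z.im < 0) : 0 < (csqrt z).re := by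
  rw [csqrt, Complex.exp_re, csqrt_half_im]
  have h1 : -Real.pi < z.arg := Complex.neg_pi_lt_arg z
  have h2 : z.arg < 0 := Complex.arg_neg_iff.mpr hz
  have : Real.cos (z.arg / 2) > 0 := by
    apply Real.cos_pos_of_mem_Ioo
    constructor <;> [linarith; linarith [Real.pi_pos]]
  positivity

lemma csqrt_im_neg {z : ℂ} (hz : z.im < 0) : (csqrt z).im < 0 := by
  rw [csqrt, Complex.exp_im, csqrt_half_im]
  have h1 : -Real.pi < z.arg := Complex.neg_pi_lt_arg z
  have h2 : z.arg < 0 := Complex.arg_neg_iff.mpr hz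
  have hs : Real.sin (z.arg / 2) < 0 := by
    apply Real.sin_neg_of_neg_of_neg_pi_lt <;> linarith
  have := Real.exp_pos (Complex.log z / 2).re
  nlinarith

lemma csqrt_ofReal_pos {r : ℝ} (hr : 0 < r) : csqrt (r : ℂ) = (Real.sqrt r : ℂ) := by
  rw [csqrt, ← Complex.ofReal_log hr.le]
  have h2 : Real.exp (Real.log r / 2) ^ 2 = r := by
    rw [sq, ← Real.exp_add, add_halves, Real.exp_log hr]
  have h3 : Real.sqrt r = Real.exp (Real.log r / 2) := by
    conv_lhs => rw [← h2]
    rw [Real.sqrt_sq (Real.exp_nonneg _)]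
  rw [show ((Real.log r : ℂ)) / 2 = ((Real.log r / 2 : ℝ) : ℂ) by push_cast; ring,
    ← Complex.ofReal_exp, h3]

lemma half_integral (b : ℝ) (hb : 0 < b) (c : ℂ) (hc : c.im < 0) :
    ∫ ℓ in (0:ℝ)..(1/2), (c + (b:ℂ) * (Real.sin (Real.pi * ℓ) : ℂ) ^ 2)⁻¹
      = 1 / (2 * csqrt c * csqrt (c + b)) := by
  have hc0 : c ≠ 0 := by intro h; rw [h] at hc; simp at hc
  have hcbim : (c + (b:ℂ)).im < 0 := by simpa using hc
  have hcb0 : c + (b:ℂ) ≠ 0 := by intro h; rw [h] at hcbim; simp at hcbim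
  set p := csqrt c with hp
  set q := csqrt (c + b) with hq
  have hp0 : p ≠ 0 := csqrt_ne_zero _
  have hq0 : q ≠ 0 := csqrt_ne_zero _
  obtain ⟨w, hwdef⟩ : ∃ w : ℂ, w = q / p := ⟨_, rfl⟩
  have hw0 : w ≠ 0 := hwdef ▸ div_ne_zero hq0 hp0
  have hwre : 0 < w.re := by
    rw [hwdef, Complex.div_re]
    have h1 := csqrt_re_pos hc; have h2 := csqrt_im_neg hc
    have h3 := csqrt_re_pos hcbim; have h4 := csqrt_im_neg hcbim
    have h5 : 0 < Complex.normSq p := Complex.normSq_pos.mpr hp0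
    have h6 : 0 < q.re * p.re + q.im * p.im := by nlinarith
    rw [← add_div]
    exact div_pos h6 h5
  have hw2 : w ^ 2 * c = c + b := by
    rw [hwdef, div_pow, csqrt_sq hc0, csqrt_sq hcb0, div_mul_cancel₀ _ hc0]
  have hden : ∀ s : ℝ, c + (b:ℂ) * (s:ℂ) ^ 2 ≠ 0 := by
    intro s h
    have h2 : (c + (b:ℂ) * (s:ℂ) ^ 2).im = c.im := by
      rw [show (b:ℂ) * (s:ℂ) ^ 2 = ((b * s ^ 2 : ℝ) : ℂ) by push_cast; ring]
      simp only [Complex.add_re, Complex.add_im, Complex.sub_re, Complex.sub_im, Complex.mul_re, Complex.mul_im, Complex.I_re, Complex.I_im, Complex.ofReal_re, Complex.ofReal_im]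
      ring
    rw [h] at h2; simp at h2; exact absurd h2.symm (ne_of_lt hc)
  obtain ⟨N, hNdef⟩ : ∃ N : ℝ → ℂ, N = fun ℓ => (Real.cos (Real.pi*ℓ) : ℂ) + Complex.I * w * (Real.sin (Real.pi*ℓ) : ℂ) := ⟨_, rfl⟩
  obtain ⟨D, hDdef⟩ : ∃ D : ℝ → ℂ, D = fun ℓ => (Real.cos (Real.pi*ℓ) : ℂ) - Complex.I * w * (Real.sin (Real.pi*ℓ) : ℂ) := ⟨_, rfl⟩
  have hNre : ∀ ℓ, (N ℓ).re = Real.cos (Real.pi*ℓ) - w.im * Real.sin (Real.pi*ℓ) := by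
    intro ℓ; simp only [hNdef, hDdef, Complex.add_re, Complex.add_im, Complex.sub_re, Complex.sub_im, Complex.mul_re, Complex.mul_im, Complex.I_re, Complex.I_im, Complex.ofReal_re, Complex.ofReal_im]; ring
  have hNim : ∀ ℓ, (N ℓ).im = w.re * Real.sin (Real.pi*ℓ) := by
    intro ℓ; simp only [hNdef, hDdef, Complex.add_re, Complex.add_im, Complex.sub_re, Complex.sub_im, Complex.mul_re, Complex.mul_im, Complex.I_re, Complex.I_im, Complex.ofReal_re, Complex.ofReal_im]; ring
  have hDre : ∀ ℓ, (D ℓ).re = Real.cos (Real.pi*ℓ) + w.im * Real.sin (Real.pi*ℓ) := by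
    intro ℓ; simp only [hNdef, hDdef, Complex.add_re, Complex.add_im, Complex.sub_re, Complex.sub_im, Complex.mul_re, Complex.mul_im, Complex.I_re, Complex.I_im, Complex.ofReal_re, Complex.ofReal_im]; ring
  have hDim : ∀ ℓ, (D ℓ).im = -(w.re * Real.sin (Real.pi*ℓ)) := by
    intro ℓ; simp only [hNdef, hDdef, Complex.add_re, Complex.add_im, Complex.sub_re, Complex.sub_im, Complex.mul_re, Complex.mul_im, Complex.I_re, Complex.I_im, Complex.ofReal_re, Complex.ofReal_im]; ring
  have hD0 : ∀ ℓ, D ℓ ≠ 0 := by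
    intro ℓ h
    have h1 : (D ℓ).im = 0 := by rw [h]; simp
    have h2 : (D ℓ).re = 0 := by rw [h]; simp
    rw [hDim ℓ] at h1
    rw [hDre ℓ] at h2
    have hs : Real.sin (Real.pi*ℓ) = 0 := by
      rcases mul_eq_zero.mp (neg_eq_zero.mp h1) with h | h
      · exact absurd h (ne_of_gt hwre)
      · exact h
    rw [hs] at h2
    nlinarith [Real.sin_sq_add_cos_sq (Real.pi*ℓ)]
  have hN0 : ∀ ℓ, N ℓ ≠ 0 := by
    intro ℓ h
    have h1 : (N ℓ).im = 0 := by rw [h]; simp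
    have h2 : (N ℓ).re = 0 := by rw [h]; simp
    rw [hNim ℓ] at h1
    rw [hNre ℓ] at h2
    have hs : Real.sin (Real.pi*ℓ) = 0 := by
      rcases mul_eq_zero.mp h1 with h | h
      · exact absurd h (ne_of_gt hwre)
      · exact h
    rw [hs] at h2
    nlinarith [Real.sin_sq_add_cos_sq (Real.pi*ℓ)]
  have hNcont : Continuous N := by rw [hNdef]; fun_prop
  have hDcont : Continuous D := by rw [hDdef]; fun_prop
  have hgim : ∀ ℓ, (N ℓ / D ℓ).im
      = 2 * w.re * Real.sin (Real.pi*ℓ) * Real.cos (Real.pi*ℓ) / Complex.normSq (D ℓ) := by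
    intro ℓ
    rw [Complex.div_im, hNre, hNim, hDre, hDim]
    ring
  have hmaps : Set.MapsTo (fun ℓ => N ℓ / D ℓ) (Icc (0:ℝ) (1/2)) {z : ℂ | 0 ≤ z.im} := by
    intro x hx
    obtain ⟨hx0, hx1⟩ := hx
    have hpi := Real.pi_pos
    have h1 : 0 ≤ Real.sin (Real.pi*x) := by
      apply Real.sin_nonneg_of_nonneg_of_le_pi
      · positivity
      · nlinarith
    have h2 : 0 ≤ Real.cos (Real.pi*x) := by
      apply Real.cos_nonneg_of_mem_Icc
      constructor <;> nlinarith
    have h3 : 0 < Complex.normSq (D x) := Complex.normSq_pos.mpr (hD0 x)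
    show 0 ≤ (N x / D x).im
    rw [hgim]
    positivity
  have hN0v : N 0 = 1 := by rw [hNdef]; simp
  have hD0v : D 0 = 1 := by rw [hDdef]; simp
  have hNhalf : N (1/2:ℝ) = Complex.I * w := by
    rw [hNdef]; norm_num [mul_one_div, Real.sin_pi_div_two, Real.cos_pi_div_two]
  have hDhalf : D (1/2:ℝ) = -(Complex.I * w) := by
    rw [hDdef]; norm_num [mul_one_div, Real.sin_pi_div_two, Real.cos_pi_div_two]
  have hIw0 : Complex.I * w ≠ 0 := mul_ne_zero Complex.I_ne_zero hw0
  obtain ⟨K, hKdef⟩ : ∃ K : ℂ, K = (2*(Real.pi:ℂ)*Complex.I*w*c)⁻¹ := ⟨_, rfl⟩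
  obtain ⟨F, hFdef⟩ : ∃ F : ℝ → ℂ, F = fun ℓ => K * Complex.log (N ℓ / D ℓ) := ⟨_, rfl⟩
  have hgcont : ContinuousOn (fun ℓ => N ℓ / D ℓ) (Icc (0:ℝ) (1/2)) :=
    hNcont.continuousOn.div hDcont.continuousOn (fun x _ => hD0 x)
  have hslit : ∀ x ∈ Ico (0:ℝ) (1/2), N x / D x ∈ Complex.slitPlane := by
    intro x hx
    rcases eq_or_lt_of_le hx.1 with h0 | h0
    · rw [← h0, hN0v, hD0v]
      exact Complex.mem_slitPlane_iff.mpr (Or.inl (by norm_num))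
    · apply Complex.mem_slitPlane_iff.mpr
      right
      rw [hgim]
      have hpi := Real.pi_pos
      have h1 : 0 < Real.sin (Real.pi*x) := by
        apply Real.sin_pos_of_pos_of_lt_pi <;> nlinarith [hx.2]
      have h2 : 0 < Real.cos (Real.pi*x) := by
        apply Real.cos_pos_of_mem_Ioo
        constructor <;> nlinarith [hx.2]
      have h3 : 0 < Complex.normSq (D x) := Complex.normSq_pos.mpr (hD0 x)
      positivity
  have hFcont : ContinuousOn F (Icc (0:ℝ) (1/2)) := by
    rw [hFdef]
    apply continuousOn_const.mul
    intro x hx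
    rcases lt_or_eq_of_le hx.2 with h12 | h12
    · exact ContinuousAt.comp_continuousWithinAt (f := fun ℓ => N ℓ / D ℓ) (g := Complex.log) (continuousAt_clog (hslit x ⟨hx.1, h12⟩)) (hgcont x hx)
    · have hgv : N x / D x = -1 := by
        rw [h12, hNhalf, hDhalf, div_neg, div_self hIw0]
      have hlogc : ContinuousWithinAt Complex.log {z : ℂ | 0 ≤ z.im} (N x / D x) := by
        rw [hgv]
        exact Complex.continuousWithinAt_log_of_re_neg_of_im_zero (by norm_num) (by norm_num)
      exact ContinuousWithinAt.comp (g := Complex.log) (f := fun ℓ => N ℓ / D ℓ) (t := {z : ℂ | 0 ≤ z.im}) hlogc (hgcont x hx) hmaps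
  have hcont_integrand : Continuous (fun ℓ:ℝ => (c + (b:ℂ)*((Real.sin (Real.pi*ℓ):ℝ):ℂ)^2)⁻¹) := by
    apply Continuous.inv₀
    · fun_prop
    · exact fun ℓ => hden _
  have hderivF : ∀ x ∈ Ioo (0:ℝ) (1/2),
      HasDerivWithinAt F ((c + (b:ℂ)*((Real.sin (Real.pi*x):ℝ):ℂ)^2)⁻¹) (Ioi x) x := by
    intro x hx
    set dN : ℂ := ((-Real.sin (Real.pi*x)*Real.pi : ℝ) : ℂ)
      + Complex.I*w*((Real.cos (Real.pi*x)*Real.pi : ℝ) : ℂ) with hdNdef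
    set dD : ℂ := ((-Real.sin (Real.pi*x)*Real.pi : ℝ) : ℂ)
      - Complex.I*w*((Real.cos (Real.pi*x)*Real.pi : ℝ) : ℂ) with hdDdef
    have hsd : HasDerivAt (fun ℓ:ℝ => Real.sin (Real.pi*ℓ)) (Real.cos (Real.pi*x)*Real.pi) x := by
      simpa [Function.comp_def] using (Real.hasDerivAt_sin (Real.pi*x)).comp x ((hasDerivAt_id x).const_mul Real.pi)
    have hcd : HasDerivAt (fun ℓ:ℝ => Real.cos (Real.pi*ℓ)) (-Real.sin (Real.pi*x)*Real.pi) x := by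
      simpa [Function.comp_def] using (Real.hasDerivAt_cos (Real.pi*x)).comp x ((hasDerivAt_id x).const_mul Real.pi)
    have hNd : HasDerivAt N dN x := by
      rw [hNdef]; exact (hcd.ofReal_comp).add ((hsd.ofReal_comp).const_mul (Complex.I*w))
    have hDd : HasDerivAt D dD x := by
      rw [hDdef]; exact (hcd.ofReal_comp).sub ((hsd.ofReal_comp).const_mul (Complex.I*w))
    have hgd := hNd.div hDd (hD0 x)
    have hsl : N x / D x ∈ Complex.slitPlane := hslit x ⟨hx.1.le, hx.2⟩
    have hld := (Complex.hasDerivAt_log hsl).comp x hgd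
    have hFd := hld.const_mul K
    have pyth : ((Real.sin (Real.pi*x) : ℝ):ℂ)^2 + ((Real.cos (Real.pi*x) : ℝ):ℂ)^2 = 1 := by
      exact_mod_cast Real.sin_sq_add_cos_sq (Real.pi*x)
    have key1 : dN * D x - N x * dD = 2*(Real.pi:ℂ)*Complex.I*w := by
      simp only [hdNdef, hdDdef, hNdef, hDdef, Complex.ofReal_mul, Complex.ofReal_neg]
      linear_combination (2*(Real.pi:ℂ)*Complex.I*w) * pyth
    have key2 : c * (N x * D x) = c + (b:ℂ) * ((Real.sin (Real.pi*x):ℝ):ℂ)^2 := by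
      simp only [hNdef, hDdef]
      linear_combination (-c*w^2*((Real.sin (Real.pi*x):ℝ):ℂ)^2) * Complex.I_sq
        + ((Real.sin (Real.pi*x):ℝ):ℂ)^2 * hw2 + c * pyth
    have hdval : (N x / D x)⁻¹ * ((dN * D x - N x * dD) / D x ^ 2)
        = 2*(Real.pi:ℂ)*Complex.I*w / (N x * D x) := by
      have hND2 : N x * D x ^ 2 ≠ 0 := mul_ne_zero (hN0 x) (pow_ne_zero 2 (hD0 x))
      have hND : N x * D x ≠ 0 := mul_ne_zero (hN0 x) (hD0 x)
      rw [key1, inv_div, div_mul_div_comm, div_eq_div_iff hND2 hND]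
      ring
    have hfinal : K * ((N x / D x)⁻¹ * ((dN * D x - N x * dD) / D x ^ 2))
        = (c + (b:ℂ)*((Real.sin (Real.pi*x):ℝ):ℂ)^2)⁻¹ := by
      rw [hdval, ← key2, hKdef]
      have hpi0 : (Real.pi:ℂ) ≠ 0 := Complex.ofReal_ne_zero.mpr Real.pi_ne_zero
      have hND : N x * D x ≠ 0 := mul_ne_zero (hN0 x) (hD0 x)
      rw [eq_comm, inv_eq_iff_eq_inv, mul_inv, inv_inv, inv_div]
      field_simp
    rw [← hfinal, hFdef]
    exact hFd.hasDerivWithinAt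
  have Key := intervalIntegral.integral_eq_sub_of_hasDeriv_right_of_le (by norm_num : (0:ℝ) ≤ 1/2)
    hFcont hderivF (hcont_integrand.intervalIntegrable 0 (1/2))
  rw [Key, hFdef]
  simp only
  rw [hNhalf, hDhalf, hN0v, hD0v, div_neg, div_self hIw0, div_one, Complex.log_one, mul_zero,
    sub_zero, Complex.log_neg_one, hKdef, hwdef]
  have hpi0 : (Real.pi:ℂ) ≠ 0 := Complex.ofReal_ne_zero.mpr Real.pi_ne_zero
  have hpc : p^2 = c := csqrt_sq hc0
  have hI := Complex.I_ne_zero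
  have hA : 2*(Real.pi:ℂ)*Complex.I*(q/p)*c ≠ 0 :=
    mul_ne_zero (mul_ne_zero (mul_ne_zero (mul_ne_zero two_ne_zero hpi0) hI)
      (div_ne_zero hq0 hp0)) hc0
  have hB : 2*p*q ≠ 0 := mul_ne_zero (mul_ne_zero two_ne_zero hp0) hq0
  rw [inv_mul_eq_div, div_eq_div_iff hA hB, one_mul]
  field_simp
  linear_combination hpc

lemma full_integral (b : ℝ) (hb : 0 < b) (c : ℂ) (hc : c.im < 0) :
    ∫ ℓ in (-(1/2):ℝ)..(1/2), (c + (b:ℂ) * (Real.sin (Real.pi * ℓ) : ℂ) ^ 2)⁻¹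
      = 1 / (csqrt c * csqrt (c + b)) := by
  have hden : ∀ s : ℝ, c + (b:ℂ) * (s:ℂ) ^ 2 ≠ 0 := by
    intro s h
    have h2 : (c + (b:ℂ) * (s:ℂ) ^ 2).im = c.im := by
      rw [show (b:ℂ) * (s:ℂ) ^ 2 = ((b * s ^ 2 : ℝ) : ℂ) by push_cast; ring]
      simp only [Complex.add_im, Complex.ofReal_im]
      ring
    rw [h] at h2; simp at h2; exact absurd h2.symm (ne_of_lt hc)
  have hcont : Continuous (fun ℓ:ℝ => (c + (b:ℂ) * (Real.sin (Real.pi * ℓ) : ℂ) ^ 2)⁻¹) :=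
    Continuous.inv₀ (by fun_prop) (fun ℓ => hden _)
  have h1 : (∫ ℓ in (-(1/2):ℝ)..0, (c + (b:ℂ) * (Real.sin (Real.pi * ℓ) : ℂ) ^ 2)⁻¹)
      = ∫ ℓ in (0:ℝ)..(1/2), (c + (b:ℂ) * (Real.sin (Real.pi * ℓ) : ℂ) ^ 2)⁻¹ := by
    have h2 := intervalIntegral.integral_comp_neg (a := (0:ℝ)) (b := (1/2:ℝ))
      (f := fun ℓ:ℝ => (c + (b:ℂ) * (Real.sin (Real.pi * ℓ) : ℂ) ^ 2)⁻¹)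
    rw [neg_zero] at h2
    rw [← h2]
    apply intervalIntegral.integral_congr
    intro x _
    simp [mul_neg, Real.sin_neg]
  rw [← intervalIntegral.integral_add_adjacent_intervals (a := (-(1/2):ℝ)) (b := (0:ℝ))
    (c := (1/2:ℝ)) (hcont.intervalIntegrable _ _) (hcont.intervalIntegrable _ _), h1,
    half_integral b hb c hc]
  have hp0 := csqrt_ne_zero c
  have hq0 := csqrt_ne_zero (c + b)
  field_simp
  ring

/-- For the nearest-neighbor chain with coupling `γ > 0`, the scattering
coefficient `ν(k) = lim_{ε→0+} (1 + γ J̃(ε - i ω_k))⁻¹` exists and equals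
`ω_a² sin(2πk)/(ω_a² sin(2πk) + 2γ √(ω₀²/2 + ω_a² sin²(πk)))`. -/
theorem stmt12 (γ ω₀ ωa : ℝ) (hγ : 0 < γ) (hω₀ : 0 ≤ ω₀) (hωa : 0 < ωa) (k : ℝ)
    (hk : k ∈ Set.Ioo (0:ℝ) (1/2)) :
    Filter.Tendsto
      (fun ε : ℝ => (1 + (γ : ℂ) * ∫ ℓ in (-(1/2):ℝ)..(1/2),
        ((ε : ℂ) - Complex.I * (Real.sqrt (ω₀ ^ 2 / 2 + ωa ^ 2 * Real.sin (Real.pi * k) ^ 2) : ℂ)) /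
          (((ε : ℂ) - Complex.I * (Real.sqrt (ω₀ ^ 2 / 2 + ωa ^ 2 * Real.sin (Real.pi * k) ^ 2) : ℂ)) ^ 2
            + ((ω₀ ^ 2 / 2 + ωa ^ 2 * Real.sin (Real.pi * ℓ) ^ 2 : ℝ) : ℂ)))⁻¹)
      (nhdsWithin 0 (Set.Ioi 0))
      (nhds ((ωa ^ 2 * Real.sin (2 * Real.pi * k)
        / (ωa ^ 2 * Real.sin (2 * Real.pi * k)
            + 2 * γ * Real.sqrt (ω₀ ^ 2 / 2 + ωa ^ 2 * Real.sin (Real.pi * k) ^ 2)) : ℝ) : ℂ)) := by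
  obtain ⟨hk0, hk1⟩ := hk
  have hpi := Real.pi_pos
  set a : ℝ := ω₀ ^ 2 / 2 with hadef
  set b : ℝ := ωa ^ 2 with hbdef
  have hb : 0 < b := by positivity
  have ha : 0 ≤ a := by positivity
  set s : ℝ := Real.sin (Real.pi * k) with hsdef
  set co : ℝ := Real.cos (Real.pi * k) with hcodef
  have hs : 0 < s := by
    rw [hsdef]
    apply Real.sin_pos_of_pos_of_lt_pi (mul_pos hpi hk0)
    nlinarith
  have hco : 0 < co := by
    rw [hcodef]; apply Real.cos_pos_of_mem_Ioo; constructor <;> nlinarith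
  set ω : ℝ := Real.sqrt (a + b * s ^ 2) with hωdef
  have hω : 0 < ω := by
    rw [hωdef]; apply Real.sqrt_pos.mpr; nlinarith [mul_pos hb (pow_pos hs 2)]
  have hω2 : ω ^ 2 = a + b * s ^ 2 := Real.sq_sqrt (by nlinarith [mul_pos hb (pow_pos hs 2)])
  have hsco : s ^ 2 + co ^ 2 = 1 := Real.sin_sq_add_cos_sq _
  set lam : ℝ → ℂ := fun ε => (ε : ℂ) - Complex.I * (ω : ℂ) with hlamdef
  set c : ℝ → ℂ := fun ε => (lam ε) ^ 2 + (a : ℂ) with hcdef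
  have hcim : ∀ ε ∈ Set.Ioi (0:ℝ), (c ε).im < 0 := by
    intro ε hε
    have h1 : (c ε).im = ε * (-ω) + (-ω) * ε := by
      simp [hcdef, hlamdef, sq, Complex.mul_im, Complex.add_im, Complex.sub_re, Complex.sub_im,
        Complex.mul_re, Complex.I_re, Complex.I_im]
    rw [h1]
    have : (0:ℝ) < ε := hε
    nlinarith
  -- the function, rewritten via the closed form of the integral
  have fun_eq : ∀ ε ∈ Set.Ioi (0:ℝ),
      (1 + (γ : ℂ) * (lam ε / (csqrt (c ε) * csqrt (c ε + b))))⁻¹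
        = (1 + (γ : ℂ) * ∫ ℓ in (-(1/2):ℝ)..(1/2),
            (lam ε) / ((lam ε) ^ 2 + ((a + b * Real.sin (Real.pi * ℓ) ^ 2 : ℝ) : ℂ)))⁻¹ := by
    intro ε hε
    have hint_eq : (∫ ℓ in (-(1/2):ℝ)..(1/2),
        (lam ε) / ((lam ε) ^ 2 + ((a + b * Real.sin (Real.pi * ℓ) ^ 2 : ℝ) : ℂ)))
        = lam ε * ∫ ℓ in (-(1/2):ℝ)..(1/2),
            (c ε + (b:ℂ) * (Real.sin (Real.pi * ℓ) : ℂ) ^ 2)⁻¹ := by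
      rw [← intervalIntegral.integral_const_mul]
      apply intervalIntegral.integral_congr
      intro x _
      simp only [div_eq_mul_inv, hcdef]
      congr 2
      push_cast
      ring
    rw [hint_eq, full_integral b hb (c ε) (hcim ε hε), mul_one_div]
  -- limits
  have hclim : Filter.Tendsto c (nhdsWithin 0 (Set.Ioi 0)) (nhds ((-(b * s^2) : ℝ) : ℂ)) := by
    have h1 : Filter.Tendsto c (nhds 0) (nhds (c 0)) := by
      apply Continuous.tendsto
      rw [hcdef, hlamdef]
      fun_prop
    have hω2' : ((ω:ℝ):ℂ)^2 = (a:ℂ) + (b:ℂ)*(s:ℂ)^2 := by exact_mod_cast hω2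
    have h2 : c 0 = ((-(b * s^2) : ℝ) : ℂ) := by
      simp only [hcdef, hlamdef]
      push_cast
      linear_combination ((ω:ℝ):ℂ)^2 * Complex.I_sq - hω2'
    rw [← h2]
    exact h1.mono_left nhdsWithin_le_nhds
  have hA : Real.sqrt (b * s^2) * Real.sqrt (b * co^2) = b * s * co := by
    rw [← Real.sqrt_mul (by positivity)]
    rw [show b * s^2 * (b * co^2) = (b*s*co)^2 by ring]
    exact Real.sqrt_sq (by positivity)
  have hA0 : 0 < Real.sqrt (b * s^2) := Real.sqrt_pos.mpr (by positivity)
  have hB0 : 0 < Real.sqrt (b * co^2) := Real.sqrt_pos.mpr (by positivity)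
  -- limit of csqrt (c ε)
  have hcin : Filter.Tendsto c (nhdsWithin 0 (Set.Ioi 0))
      (nhdsWithin ((-(b * s^2) : ℝ) : ℂ) {z : ℂ | z.im < 0}) := by
    rw [tendsto_nhdsWithin_iff]
    refine ⟨hclim, ?_⟩
    exact eventually_mem_nhdsWithin.mono (fun ε hε => hcim ε hε)
  have hloglim : Filter.Tendsto (fun ε => Complex.log (c ε)) (nhdsWithin 0 (Set.Ioi 0))
      (nhds ((Real.log (b * s^2) : ℂ) - (Real.pi:ℂ) * Complex.I)) := by
    have h1 := Complex.tendsto_log_nhdsWithin_im_neg_of_re_neg_of_im_zero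
      (z := ((-(b * s^2) : ℝ) : ℂ))
      (by rw [Complex.ofReal_re]; nlinarith [mul_pos hb (pow_pos hs 2)])
      (Complex.ofReal_im _)
    have h2 : ‖((-(b * s^2) : ℝ) : ℂ)‖ = b * s^2 := by
      rw [Complex.norm_real, Real.norm_eq_abs, abs_neg, abs_of_pos (by positivity)]
    rw [h2] at h1
    exact h1.comp hcin
  have hexphalf : ∀ r : ℝ, 0 < r → Complex.exp ((Real.log r : ℂ)/2) = (Real.sqrt r : ℂ) := by
    intro r hr
    have := csqrt_ofReal_pos hr
    rwa [csqrt, ← Complex.ofReal_log hr.le] at this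
  have hexpI : Complex.exp ((Real.pi:ℂ) * Complex.I / 2) = Complex.I := by
    rw [show ((Real.pi:ℂ) * Complex.I / 2) = ((Real.pi/2 : ℝ) : ℂ) * Complex.I by push_cast; ring,
      Complex.exp_mul_I, ← Complex.ofReal_cos, ← Complex.ofReal_sin,
      Real.cos_pi_div_two, Real.sin_pi_div_two]
    simp
  have hsqrtlim : Filter.Tendsto (fun ε => csqrt (c ε)) (nhdsWithin 0 (Set.Ioi 0))
      (nhds ((Real.sqrt (b * s^2) : ℂ) * (-Complex.I))) := by
    have h1 : Filter.Tendsto (fun ε => Complex.exp (Complex.log (c ε) / 2))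
        (nhdsWithin 0 (Set.Ioi 0))
        (nhds (Complex.exp (((Real.log (b * s^2) : ℂ) - (Real.pi:ℂ) * Complex.I)/2))) :=
      (Complex.continuous_exp.tendsto _).comp (hloglim.div_const 2)
    have h2 : Complex.exp (((Real.log (b * s^2) : ℂ) - (Real.pi:ℂ) * Complex.I)/2)
        = (Real.sqrt (b * s^2) : ℂ) * (-Complex.I) := by
      rw [sub_div, Complex.exp_sub, hexphalf _ (by positivity), hexpI]
      rw [div_eq_mul_inv, Complex.inv_I]
    rw [← h2]
    exact h1
  -- limit of csqrt (c ε + b)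
  have hsqrtlim2 : Filter.Tendsto (fun ε => csqrt (c ε + b)) (nhdsWithin 0 (Set.Ioi 0))
      (nhds ((Real.sqrt (b * co^2) : ℂ))) := by
    have hpt : ((b * co^2 : ℝ) : ℂ) = ((-(b * s^2) : ℝ) : ℂ) + (b:ℂ) := by
      push_cast
      linear_combination (b:ℂ) * (by exact_mod_cast hsco : ((s:ℝ):ℂ)^2 + ((co:ℝ):ℂ)^2 = 1)
    have hcb : Filter.Tendsto (fun ε => c ε + (b:ℂ)) (nhdsWithin 0 (Set.Ioi 0))
        (nhds (((b * co^2 : ℝ)) : ℂ)) := by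
      rw [hpt]
      exact hclim.add tendsto_const_nhds
    have hca : ContinuousAt csqrt ((b * co^2 : ℝ) : ℂ) := by
      apply Complex.continuous_exp.continuousAt.comp
      apply ContinuousAt.div_const
      exact continuousAt_clog (Complex.ofReal_mem_slitPlane.mpr (by positivity))
    have := hca.tendsto.comp hcb
    rwa [csqrt_ofReal_pos (by positivity : (0:ℝ) < b * co^2)] at this
  have hlamlim : Filter.Tendsto lam (nhdsWithin 0 (Set.Ioi 0))
      (nhds (-(Complex.I * (ω:ℂ)))) := by
    have h1 : Filter.Tendsto lam (nhds 0) (nhds (lam 0)) := by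
      apply Continuous.tendsto
      rw [hlamdef]; fun_prop
    have h2 : lam 0 = -(Complex.I * (ω:ℂ)) := by simp [hlamdef]
    rw [← h2]
    exact h1.mono_left nhdsWithin_le_nhds
  -- the limit value
  have hdenlim_ne : ((Real.sqrt (b * s^2) : ℂ) * (-Complex.I)) * (Real.sqrt (b * co^2) : ℂ) ≠ 0 := by
    apply mul_ne_zero (mul_ne_zero _ (neg_ne_zero.mpr Complex.I_ne_zero)) _
    · exact_mod_cast ne_of_gt hA0
    · exact_mod_cast ne_of_gt hB0
  have hABc : ((Real.sqrt (b*s^2) : ℝ):ℂ) * ((Real.sqrt (b*co^2) : ℝ):ℂ) = ((b*s*co : ℝ):ℂ) := by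
    exact_mod_cast congrArg Complex.ofReal hA
  have hbsc0 : ((b*s*co : ℝ):ℂ) ≠ 0 := by
    rw [Ne, Complex.ofReal_eq_zero]
    positivity
  have hvalue : (-(Complex.I * (ω:ℂ))) / (((Real.sqrt (b * s^2) : ℂ) * (-Complex.I))
      * (Real.sqrt (b * co^2) : ℂ)) = ((ω / (b * s * co) : ℝ) : ℂ) := by
    rw [mul_right_comm, hABc, div_eq_iff (mul_ne_zero hbsc0 (neg_ne_zero.mpr Complex.I_ne_zero))]
    rw [Complex.ofReal_div]
    have hb' : ((b:ℂ) * (s:ℂ) * (co:ℂ)) ≠ 0 := by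
      rw [← Complex.ofReal_mul, ← Complex.ofReal_mul]; exact hbsc0
    have hb1 : (b:ℂ) ≠ 0 := by exact_mod_cast hb.ne'
    have hs1 : (s:ℂ) ≠ 0 := by exact_mod_cast hs.ne'
    have hco1 : (co:ℂ) ≠ 0 := by exact_mod_cast hco.ne'
    push_cast
    field_simp
  have hL : Filter.Tendsto
      (fun ε => (1 + (γ : ℂ) * (lam ε / (csqrt (c ε) * csqrt (c ε + b))))⁻¹)
      (nhdsWithin 0 (Set.Ioi 0))
      (nhds ((1 + (γ:ℂ) * ((ω / (b * s * co) : ℝ) : ℂ))⁻¹)) := by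
    apply Filter.Tendsto.inv₀
    · rw [← hvalue]
      exact tendsto_const_nhds.add ((tendsto_const_nhds.mul
        (hlamlim.div (hsqrtlim.mul hsqrtlim2) hdenlim_ne)))
    · rw [show (1 + (γ:ℂ) * ((ω / (b * s * co) : ℝ) : ℂ)) = (((1 + γ * (ω / (b * s * co)) : ℝ)) : ℂ) by push_cast; ring]
      rw [Ne, Complex.ofReal_eq_zero]
      have : 0 < γ * (ω / (b * s * co)) := by positivity
      nlinarith
  -- identify the limit value with the target
  have htarget : ((ωa ^ 2 * Real.sin (2 * Real.pi * k)
        / (ωa ^ 2 * Real.sin (2 * Real.pi * k)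
            + 2 * γ * Real.sqrt (ω₀ ^ 2 / 2 + ωa ^ 2 * Real.sin (Real.pi * k) ^ 2)) : ℝ) : ℂ)
      = (1 + (γ:ℂ) * ((ω / (b * s * co) : ℝ) : ℂ))⁻¹ := by
    rw [show (1 + (γ:ℂ) * ((ω / (b * s * co) : ℝ) : ℂ)) = (((1 + γ * (ω / (b * s * co)) : ℝ)) : ℂ) by push_cast; ring]
    rw [← Complex.ofReal_inv]
    congr 1
    have hsin2 : Real.sin (2 * Real.pi * k) = 2 * s * co := by
      rw [show 2 * Real.pi * k = 2 * (Real.pi * k) by ring, Real.sin_two_mul]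
    have hωeq : Real.sqrt (ω₀ ^ 2 / 2 + ωa ^ 2 * Real.sin (Real.pi * k) ^ 2) = ω := by
      rw [hωdef, hadef, hbdef, hsdef]
    rw [hsin2, hωeq]
    have hbsc : (0:ℝ) < b * s * co := by positivity
    have e1 : 1 + γ * (ω / (b*s*co)) = (b*(2*s*co) + 2*γ*ω) / (b*(2*s*co)) := by
      field_simp
    rw [e1, inv_div]
  rw [htarget]
  apply hL.congr'
  apply eventually_mem_nhdsWithin.mono
  intro ε hε
  have := fun_eq ε hε
  beta_reduce
  rw [this]
end

section
/- Let γ > 0, ω_a > 0, and let k ∈ (0,1/2). Then the limit as ε → 0+ of (1 + γ·∫_{-1/2}^{1/2} (ε − i·ω_a·sin(πk))/((ε − i·ω_a·sin(πk))² + ω_a²·sin²(πℓ)) dℓ)⁻¹ exists and equals ν(k) = ω_a·cos(πk)/(ω_a·cos(πk) + γ). -/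
open Complex Real Filter Set intervalIntegral

noncomputable section

private lemma stmt13_key (r : ℂ) (hr : ‖r‖ < 1) :
    ∫ ℓ in (-(1/2):ℝ)..(1/2),
      (1 - r * Complex.exp (2 * Real.pi * Complex.I * ℓ))⁻¹ *
      (1 - r * Complex.exp (-(2 * Real.pi * Complex.I) * ℓ))⁻¹ = (1 - r ^ 2)⁻¹ := by
  have hπ : (0:ℝ) < Real.pi := Real.pi_pos
  -- basic nonvanishing
  have habs_exp : ∀ (c : ℂ) (hc : c.re = 0) (ℓ : ℝ), ‖Complex.exp (c * ℓ)‖ = 1 := by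
    intro c hc ℓ
    rw [Complex.norm_exp]
    simp [Complex.mul_re, hc]
  have hre : ∀ (w : ℂ), ‖w‖ = 1 → 0 < (1 - r * w).re := by
    intro w hw
    have h1 : ‖r * w‖ < 1 := by rw [norm_mul, hw, mul_one]; exact hr
    have h2 : (r*w).re ≤ ‖r*w‖ := Complex.re_le_norm _
    simp only [Complex.sub_re, Complex.one_re]
    linarith
  have hslit : ∀ (w : ℂ), ‖w‖ = 1 → (1 - r * w) ∈ Complex.slitPlane := by
    intro w hw
    exact Complex.mem_slitPlane_iff.mpr (Or.inl (hre w hw))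
  have hne : ∀ (w : ℂ), ‖w‖ = 1 → (1 - r * w) ≠ 0 := by
    intro w hw h
    have := hre w hw
    rw [h] at this; simp at this
  have hr2 : 1 - r ^ 2 ≠ 0 := by
    intro h
    have : ‖r^2‖ < 1 := by
      rw [norm_pow]; exact pow_lt_one₀ (norm_nonneg r) hr two_ne_zero
    have h1 : r ^ 2 = 1 := by linear_combination -h
    rw [h1] at this; simp at this
  have hrec : ∀ ℓ : ℝ, (2 * Real.pi * Complex.I * (ℓ:ℂ)).re = 0 := by
    intro ℓ; simp [Complex.mul_re]
  have hrec' : ∀ ℓ : ℝ, ((-(2 * Real.pi * Complex.I)) * (ℓ:ℂ)).re = 0 := by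
    intro ℓ; simp [Complex.mul_re]
  set c : ℂ := 2 * Real.pi * Complex.I with hc
  have habsp : ∀ ℓ : ℝ, ‖Complex.exp (c * ℓ)‖ = 1 := fun ℓ => habs_exp c (by simp [hc]) ℓ
  have habsm : ∀ ℓ : ℝ, ‖Complex.exp (-c * ℓ)‖ = 1 := fun ℓ => habs_exp (-c) (by simp [hc]) ℓ
  -- antiderivative
  set F : ℝ → ℂ := fun ℓ => (1 - r^2)⁻¹ *
      ((ℓ:ℂ) + (2 * Real.pi * Complex.I)⁻¹ *
        (Complex.log (1 - r * Complex.exp (-c * ℓ)) - Complex.log (1 - r * Complex.exp (c * ℓ)))) with hF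
  have hCont : Continuous fun ℓ : ℝ =>
      (1 - r * Complex.exp (c * ℓ))⁻¹ * (1 - r * Complex.exp (-c * ℓ))⁻¹ := by
    apply Continuous.mul
    · exact (continuous_const.sub (continuous_const.mul
        (Complex.continuous_exp.comp (continuous_const.mul Complex.continuous_ofReal)))).inv₀
        (fun ℓ => hne _ (habsp ℓ))
    · exact (continuous_const.sub (continuous_const.mul
        (Complex.continuous_exp.comp (continuous_const.mul Complex.continuous_ofReal)))).inv₀
        (fun ℓ => hne _ (habsm ℓ))
  have hderiv : ∀ ℓ : ℝ, HasDerivAt F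
      ((1 - r * Complex.exp (c * ℓ))⁻¹ * (1 - r * Complex.exp (-c * ℓ))⁻¹) ℓ := by
    intro ℓ
    have hid : HasDerivAt (fun ℓ : ℝ => (ℓ:ℂ)) 1 ℓ := by
      simpa using (hasDerivAt_id ℓ).ofReal_comp
    have hEp : HasDerivAt (fun ℓ : ℝ => Complex.exp (c * ℓ)) (Complex.exp (c * ℓ) * c) ℓ := by
      simpa using (hid.const_mul c).cexp
    have hEm : HasDerivAt (fun ℓ : ℝ => Complex.exp (-c * ℓ)) (Complex.exp (-c * ℓ) * (-c)) ℓ := by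
      simpa using (hid.const_mul (-c)).cexp
    have hLp : HasDerivAt (fun ℓ : ℝ => Complex.log (1 - r * Complex.exp (c * ℓ)))
        ((-(r * (Complex.exp (c * ℓ) * c))) / (1 - r * Complex.exp (c * ℓ))) ℓ :=
      HasDerivAt.clog_real ((hEp.const_mul r).const_sub 1) (hslit _ (habsp ℓ))
    have hLm : HasDerivAt (fun ℓ : ℝ => Complex.log (1 - r * Complex.exp (-c * ℓ)))
        ((-(r * (Complex.exp (-c * ℓ) * (-c)))) / (1 - r * Complex.exp (-c * ℓ))) ℓ :=
      HasDerivAt.clog_real ((hEm.const_mul r).const_sub 1) (hslit _ (habsm ℓ))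
    have hsum := ((hid.add (((hLm.sub hLp)).const_mul ((2 * Real.pi * Complex.I)⁻¹))).const_mul
      ((1 - r^2)⁻¹))
    refine HasDerivAt.congr_deriv hsum (Eq.symm ?_)
    set a := Complex.exp (c * ℓ) with ha'
    set b := Complex.exp (-c * ℓ) with hb'
    have hab : a * b = 1 := by
      rw [ha', hb', ← Complex.exp_add]; ring_nf; exact Complex.exp_zero
    have ha : 1 - r * a ≠ 0 := hne _ (habsp ℓ)
    have hb : 1 - r * b ≠ 0 := hne _ (habsm ℓ)
    have h2πI : (2 * Real.pi * Complex.I) ≠ 0 := by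
      simp [Complex.ext_iff, Real.pi_ne_zero]
    have hc0 : c ≠ 0 := h2πI
    rw [div_sub_div _ _ hb ha, hc]
    field_simp
    ring_nf
    linear_combination (r^2) * hab
  rw [intervalIntegral.integral_eq_sub_of_hasDerivAt (fun ℓ _ => hderiv ℓ)
    ((hCont.intervalIntegrable _ _))]
  have v1 : Complex.exp (c * ((1/2:ℝ):ℂ)) = -1 := by
    rw [show c * ((1/2:ℝ):ℂ) = (Real.pi:ℂ) * Complex.I by rw [hc]; push_cast; ring]
    exact Complex.exp_pi_mul_I
  have v2 : Complex.exp (-c * ((1/2:ℝ):ℂ)) = -1 := by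
    rw [show -c * ((1/2:ℝ):ℂ) = -((Real.pi:ℂ) * Complex.I) by rw [hc]; push_cast; ring,
      Complex.exp_neg, Complex.exp_pi_mul_I]
    norm_num
  have v3 : Complex.exp (c * ((-(1/2):ℝ):ℂ)) = -1 := by
    rw [show c * ((-(1/2):ℝ):ℂ) = -((Real.pi:ℂ) * Complex.I) by rw [hc]; push_cast; ring,
      Complex.exp_neg, Complex.exp_pi_mul_I]
    norm_num
  have v4 : Complex.exp (-c * ((-(1/2):ℝ):ℂ)) = -1 := by
    rw [show -c * ((-(1/2):ℝ):ℂ) = (Real.pi:ℂ) * Complex.I by rw [hc]; push_cast; ring]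
    exact Complex.exp_pi_mul_I
  simp only [hF, v1, v2, v3, v4]
  push_cast
  ring


private lemma stmt13_one_sub_ne {r w : ℂ} (hr : ‖r‖ < 1) (hw : ‖w‖ = 1) :
    0 < (1 - r * w).re := by
  have h1 : ‖r * w‖ < 1 := by rw [norm_mul, hw, mul_one]; exact hr
  have h2 : (r * w).re ≤ ‖r * w‖ := Complex.re_le_norm _
  simp only [Complex.sub_re, Complex.one_re]
  linarith

private lemma stmt13_ne_zero {r w : ℂ} (hr : ‖r‖ < 1) (hw : ‖w‖ = 1) :
    1 - r * w ≠ 0 := by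
  intro h
  have := stmt13_one_sub_ne hr hw
  rw [h] at this; simp at this

private lemma stmt13_abs_exp (c : ℂ) (hc : c.re = 0) (ℓ : ℝ) :
    ‖Complex.exp (c * ℓ)‖ = 1 := by
  rw [Complex.norm_exp]
  simp [Complex.mul_re, hc]

private lemma stmt13_abs_lt {A B ω : ℝ} (hω : 0 < ω) (hA : 0 ≤ A) (hB : 0 ≤ B)
    (hprod : A * B = ω ^ 2) (hlt : A ^ 2 < B ^ 2) : A < ω := by
  by_contra hcon
  push_neg at hcon
  have h1 : B ≤ ω := by nlinarith
  nlinarith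

set_option maxHeartbeats 2000000 in
/-- For the unpinned (acoustic) nearest-neighbor chain with coupling `γ > 0`,
the scattering coefficient `ν(k) = lim_{ε→0+} (1 + γ J̃(ε - i ω_a sin(πk)))⁻¹` exists and
equals `ω_a cos(πk)/(ω_a cos(πk) + γ)`. -/
theorem stmt13 (γ ωa : ℝ) (hγ : 0 < γ) (hωa : 0 < ωa) (k : ℝ)
    (hk : k ∈ Set.Ioo (0:ℝ) (1/2)) :
    Filter.Tendsto
      (fun ε : ℝ => (1 + (γ : ℂ) * ∫ ℓ in (-(1/2):ℝ)..(1/2),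
        ((ε : ℂ) - Complex.I * ((ωa * Real.sin (Real.pi * k) : ℝ) : ℂ)) /
          (((ε : ℂ) - Complex.I * ((ωa * Real.sin (Real.pi * k) : ℝ) : ℂ)) ^ 2
            + ((ωa ^ 2 * Real.sin (Real.pi * ℓ) ^ 2 : ℝ) : ℂ)))⁻¹)
      (nhdsWithin 0 (Set.Ioi 0))
      (nhds ((ωa * Real.cos (Real.pi * k) / (ωa * Real.cos (Real.pi * k) + γ) : ℝ) : ℂ)) := by
  obtain ⟨hk0, hk2⟩ := hk
  have hπ : (0:ℝ) < Real.pi := Real.pi_pos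
  set S := Real.sin (Real.pi * k) with hSdef
  set C := Real.cos (Real.pi * k) with hCdef
  have hkπ : 0 < Real.pi * k := by positivity
  have hkπ2 : Real.pi * k < Real.pi / 2 := by nlinarith
  have hS : 0 < S := Real.sin_pos_of_pos_of_lt_pi hkπ (by nlinarith)
  have hC : 0 < C := Real.cos_pos_of_mem_Ioo ⟨by linarith, hkπ2⟩
  have hpyth : S ^ 2 + C ^ 2 = 1 := Real.sin_sq_add_cos_sq _
  have hpythC : ((S:ℂ)) ^ 2 + ((C:ℂ)) ^ 2 = 1 := by exact_mod_cast congrArg (Complex.ofReal) hpyth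
  set β := ωa * S with hβdef
  have hβ : 0 < β := by positivity
  have hβlt : β < ωa := by nlinarith [mul_pos hC hC, hωa, hS, hpyth]
  have hωa0 : (ωa : ℂ) ≠ 0 := by exact_mod_cast hωa.ne'
  obtain ⟨lam, hlamdef⟩ : ∃ f : ℝ → ℂ, f = fun ε : ℝ => (ε:ℂ) - Complex.I * (β:ℂ) := ⟨_, rfl⟩
  obtain ⟨w, hwdef⟩ : ∃ f : ℝ → ℂ, f = fun ε : ℝ => (lam ε) ^ 2 + ((ωa:ℂ)) ^ 2 := ⟨_, rfl⟩
  obtain ⟨s, hsdef⟩ : ∃ f : ℝ → ℂ, f = fun ε : ℝ => (w ε) ^ (((2:ℕ):ℂ))⁻¹ := ⟨_, rfl⟩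
  obtain ⟨u, hudef⟩ : ∃ f : ℝ → ℂ, f = fun ε : ℝ => (s ε - lam ε) / (ωa:ℂ) := ⟨_, rfl⟩
  obtain ⟨r, hrdef⟩ : ∃ f : ℝ → ℂ, f = fun ε : ℝ => (u ε) ^ 2 := ⟨_, rfl⟩
  have hlam_re : ∀ ε : ℝ, (lam ε).re = ε := by intro ε; simp [hlamdef]
  have hlam_im : ∀ ε : ℝ, (lam ε).im = -β := by intro ε; simp [hlamdef]
  have hwre : ∀ ε : ℝ, (w ε).re = ε ^ 2 + (ωa ^ 2 - β ^ 2) := by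
    intro ε
    simp [hwdef, hlamdef, pow_two, Complex.mul_re, Complex.sub_re, Complex.sub_im,
      Complex.mul_im, Complex.ofReal_re, Complex.ofReal_im, Complex.I_re, Complex.I_im]
    ring
  have hwim : ∀ ε : ℝ, (w ε).im = -(2 * ε * β) := by
    intro ε
    simp [hwdef, hlamdef, pow_two, Complex.mul_re, Complex.sub_re, Complex.sub_im,
      Complex.mul_im, Complex.ofReal_re, Complex.ofReal_im, Complex.I_re, Complex.I_im]
    ring
  have hd : 0 < ωa ^ 2 - β ^ 2 := by nlinarith
  have hwre_pos : ∀ ε : ℝ, 0 < (w ε).re := by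
    intro ε; rw [hwre]; nlinarith [sq_nonneg ε]
  have hwslit : ∀ ε : ℝ, w ε ∈ Complex.slitPlane := fun ε =>
    Complex.mem_slitPlane_iff.mpr (Or.inl (hwre_pos ε))
  have hw0 : ∀ ε : ℝ, w ε ≠ 0 := by
    intro ε h
    have := hwre_pos ε
    rw [h] at this; simp at this
  have hs2 : ∀ ε : ℝ, (s ε) ^ 2 = w ε := fun ε => by
    simp only [hsdef]
    exact Complex.cpow_nat_inv_pow _ two_ne_zero
  have hfac : ∀ ε : ℝ, (s ε - lam ε) * (s ε + lam ε) = ((ωa:ℂ)) ^ 2 := by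
    intro ε
    have hwε : w ε = (lam ε) ^ 2 + ((ωa:ℂ)) ^ 2 := by simp only [hwdef]
    linear_combination hs2 ε + hwε
  -- properties for ε > 0
  have hsprop : ∀ ε : ℝ, 0 < ε → 0 < (s ε).re ∧ (s ε).im < 0 := by
    intro ε hε
    have hwim_neg : (w ε).im < 0 := by rw [hwim]; nlinarith
    have harg_lt : Complex.arg (w ε) < 0 := Complex.arg_neg_iff.mpr hwim_neg
    have harg_gt : -Real.pi < Complex.arg (w ε) := Complex.neg_pi_lt_arg _
    have hsval : s ε = Complex.exp (Complex.log (w ε) * (((2:ℕ):ℂ))⁻¹) := by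
      simp only [hsdef]
      exact Complex.cpow_def_of_ne_zero (hw0 ε) _
    have him : (Complex.log (w ε) * (((2:ℕ):ℂ))⁻¹).im = Complex.arg (w ε) / 2 := by
      have h2 : ((((2:ℕ):ℂ)))⁻¹ = (((2⁻¹:ℝ)):ℂ) := by norm_num
      rw [h2]
      simp [Complex.mul_im, Complex.log_im]
      ring
    constructor
    · rw [hsval, Complex.exp_re, him]
      exact mul_pos (Real.exp_pos _)
        (Real.cos_pos_of_mem_Ioo ⟨by linarith, by linarith⟩)
    · rw [hsval, Complex.exp_im, him]
      exact mul_neg_of_pos_of_neg (Real.exp_pos _)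
        (Real.sin_neg_of_neg_of_neg_pi_lt (by linarith) (by linarith))
  have habsu : ∀ ε : ℝ, 0 < ε → ‖u ε‖ < 1 := by
    intro ε hε
    obtain ⟨hsre, hsim⟩ := hsprop ε hε
    have h4 : (‖s ε + lam ε‖) ^ 2 - (‖s ε - lam ε‖) ^ 2
        = 4 * ((s ε).re * (lam ε).re + (s ε).im * (lam ε).im) := by
      rw [Complex.sq_norm, Complex.sq_norm]
      simp [Complex.normSq_apply, Complex.add_re, Complex.add_im, Complex.sub_re, Complex.sub_im]
      ring
    have hpos : 0 < (s ε).re * (lam ε).re + (s ε).im * (lam ε).im := by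
      rw [hlam_re, hlam_im]
      have h5 : 0 < (s ε).re * ε := mul_pos hsre hε
      have h6 : 0 < (s ε).im * (-β) := mul_pos_of_neg_of_neg hsim (by linarith)
      linarith
    have habsprod : ‖s ε - lam ε‖ * ‖s ε + lam ε‖ = ωa ^ 2 := by
      rw [← norm_mul, hfac ε]
      rw [norm_pow, Complex.norm_real, Real.norm_eq_abs, abs_of_pos hωa]
    have hnn1 := norm_nonneg (s ε - lam ε)
    have hnn2 := norm_nonneg (s ε + lam ε)
    have h6 : ‖s ε - lam ε‖ < ωa :=
      stmt13_abs_lt hωa hnn1 hnn2 habsprod (by nlinarith)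
    have h7 : ‖u ε‖ = ‖s ε - lam ε‖ / ωa := by
      simp only [hudef, norm_div, Complex.norm_real, Real.norm_eq_abs, abs_of_pos hωa]
    rw [h7, div_lt_one hωa]
    exact h6
  have habsr : ∀ ε : ℝ, 0 < ε → ‖r ε‖ < 1 := by
    intro ε hε
    simp only [hrdef, norm_pow]
    exact pow_lt_one₀ (norm_nonneg _) (habsu ε hε) two_ne_zero
  have hune : ∀ ε : ℝ, u ε ≠ 0 := by
    intro ε h
    have h1 : s ε - lam ε = 0 := by
      simp only [hudef, div_eq_zero_iff] at h
      rcases h with h | h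
      · exact h
      · exact absurd h hωa0
    have h2 := hfac ε
    rw [h1, zero_mul] at h2
    exact (pow_ne_zero 2 hωa0) h2.symm
  have hrne : ∀ ε : ℝ, r ε ≠ 0 := fun ε => by
    simp only [hrdef]
    exact pow_ne_zero _ (hune ε)
  have hquad : ∀ ε : ℝ, (ωa:ℂ) ^ 2 * (r ε) ^ 2 - (4 * (lam ε) ^ 2 + 2 * (ωa:ℂ) ^ 2) * r ε
      + (ωa:ℂ) ^ 2 = 0 := by
    intro ε
    have hq1 : ((ωa:ℂ) * u ε) ^ 2 + 2 * lam ε * ((ωa:ℂ) * u ε) = ((ωa:ℂ)) ^ 2 := by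
      have hωu : (ωa:ℂ) * u ε = s ε - lam ε := by
        simp only [hudef]; field_simp
      rw [hωu]
      linear_combination hfac ε
    have hq1' : (ωa:ℂ) * (u ε) ^ 2 + 2 * lam ε * u ε - (ωa:ℂ) = 0 := by
      refine mul_left_cancel₀ hωa0 ?_
      linear_combination hq1
    have hr' : r ε = u ε ^ 2 := by simp only [hrdef]
    rw [hr']
    linear_combination ((ωa:ℂ) * (u ε) ^ 2 - 2 * lam ε * (u ε) - (ωa:ℂ)) * hq1'

  have h1r2 : ∀ ε : ℝ, 0 < ε → (1:ℂ) - (r ε) ^ 2 ≠ 0 := by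
    intro ε hε h
    have h1 : ‖(r ε) ^ 2‖ < 1 := by
      rw [norm_pow]
      exact pow_lt_one₀ (norm_nonneg _) (habsr ε hε) two_ne_zero
    have h2 : (r ε) ^ 2 = 1 := by linear_combination -h
    rw [h2] at h1; simp at h1
  have hint : ∀ ε : ℝ, 0 < ε →
      (∫ ℓ in (-(1/2):ℝ)..(1/2),
        lam ε / ((lam ε) ^ 2 + ((ωa ^ 2 * Real.sin (Real.pi * ℓ) ^ 2 : ℝ) : ℂ)))
      = 4 * lam ε * r ε / ((ωa:ℂ) ^ 2 * (1 - (r ε) ^ 2)) := by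
    intro ε hε
    have hrabs := habsr ε hε
    have hEqOn : Set.EqOn
        (fun ℓ : ℝ => lam ε / ((lam ε) ^ 2 + ((ωa ^ 2 * Real.sin (Real.pi * ℓ) ^ 2 : ℝ) : ℂ)))
        (fun ℓ : ℝ => (4 * r ε / (ωa:ℂ) ^ 2 * lam ε) *
          ((1 - r ε * Complex.exp (2 * Real.pi * Complex.I * ℓ))⁻¹ *
           (1 - r ε * Complex.exp (-(2 * Real.pi * Complex.I) * ℓ))⁻¹))
        (Set.uIcc (-(1/2):ℝ) (1/2)) := by
      intro ℓ _
      simp only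
      set z := Complex.exp (2 * Real.pi * Complex.I * (ℓ:ℂ)) with hz
      set zb := Complex.exp (-(2 * Real.pi * Complex.I) * (ℓ:ℂ)) with hzb
      have habsz : ‖z‖ = 1 := stmt13_abs_exp _ (by simp) ℓ
      have habszb : ‖zb‖ = 1 := stmt13_abs_exp _ (by simp) ℓ
      have hzzb : z * zb = 1 := by
        rw [hz, hzb, ← Complex.exp_add]; ring_nf; exact Complex.exp_zero
      have hza : (1:ℂ) - r ε * z ≠ 0 := stmt13_ne_zero hrabs habsz
      have hzba : (1:ℂ) - r ε * zb ≠ 0 := stmt13_ne_zero hrabs habszb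
      have hcos2 : Real.cos (2 * Real.pi * ℓ) = 1 - 2 * Real.sin (Real.pi * ℓ) ^ 2 := by
        have h1 := Real.cos_two_mul (Real.pi * ℓ)
        have h2 := Real.sin_sq_add_cos_sq (Real.pi * ℓ)
        have h3 : 2 * (Real.pi * ℓ) = 2 * Real.pi * ℓ := by ring
        rw [h3] at h1
        linarith
      have hzv : z = ((Real.cos (2 * Real.pi * ℓ) : ℝ):ℂ)
          + ((Real.sin (2 * Real.pi * ℓ) : ℝ):ℂ) * Complex.I := by
        rw [hz, show (2 * (Real.pi:ℂ) * Complex.I * (ℓ:ℂ)) = ((2 * Real.pi * ℓ : ℝ):ℂ) * Complex.I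
            by push_cast; ring,
          Complex.exp_mul_I, ← Complex.ofReal_cos, ← Complex.ofReal_sin]
      have hzbv : zb = ((Real.cos (2 * Real.pi * ℓ) : ℝ):ℂ)
          - ((Real.sin (2 * Real.pi * ℓ) : ℝ):ℂ) * Complex.I := by
        rw [hzb, show (-(2 * (Real.pi:ℂ) * Complex.I) * (ℓ:ℂ)) = ((-(2 * Real.pi * ℓ) : ℝ):ℂ) * Complex.I
            by push_cast; ring,
          Complex.exp_mul_I, ← Complex.ofReal_cos, ← Complex.ofReal_sin, Real.cos_neg, Real.sin_neg]
        push_cast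
        ring
      have hzsum : z + zb = 2 - 4 * ((Real.sin (Real.pi * ℓ) : ℝ):ℂ) ^ 2 := by
        rw [hzv, hzbv]
        have hc : ((Real.cos (2 * Real.pi * ℓ) : ℝ):ℂ) = 1 - 2 * ((Real.sin (Real.pi * ℓ) : ℝ):ℂ) ^ 2 := by
          push_cast [hcos2]
          ring
        rw [hc]; ring
      have hcast : ((ωa ^ 2 * Real.sin (Real.pi * ℓ) ^ 2 : ℝ) : ℂ)
          = (ωa:ℂ) ^ 2 * ((Real.sin (Real.pi * ℓ) : ℝ):ℂ) ^ 2 := by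
        push_cast; ring
      have hden4 : 4 * r ε * ((lam ε) ^ 2 + ((ωa ^ 2 * Real.sin (Real.pi * ℓ) ^ 2 : ℝ) : ℂ))
          = (ωa:ℂ) ^ 2 * ((1 - r ε * z) * (1 - r ε * zb)) := by
        rw [hcast]
        linear_combination (-1:ℂ) * hquad ε + (r ε * (ωa:ℂ) ^ 2) * hzsum
          - ((ωa:ℂ) ^ 2 * (r ε) ^ 2) * hzzb
      have hDne : (lam ε) ^ 2 + ((ωa ^ 2 * Real.sin (Real.pi * ℓ) ^ 2 : ℝ) : ℂ) ≠ 0 := by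
        intro h
        rw [h, mul_zero] at hden4
        exact (mul_ne_zero (pow_ne_zero 2 hωa0) (mul_ne_zero hza hzba)) hden4.symm
      have hABne : ((ωa:ℂ) ^ 2) * ((1 - r ε * z) * (1 - r ε * zb)) ≠ 0 :=
        mul_ne_zero (pow_ne_zero 2 hωa0) (mul_ne_zero hza hzba)
      have hDne' : (lam ε) ^ 2 + (ωa:ℂ) ^ 2 * ((Real.sin (Real.pi * ℓ) : ℝ):ℂ) ^ 2 ≠ 0 := by
        rw [← hcast]; exact hDne
      have hX : (4 * r ε / (ωa:ℂ) ^ 2 * lam ε) *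
          ((1 - r ε * z)⁻¹ * (1 - r ε * zb)⁻¹)
          = (4 * r ε * lam ε) / ((ωa:ℂ) ^ 2 * ((1 - r ε * z) * (1 - r ε * zb))) := by
        field_simp
      rw [hcast] at hden4
      rw [hcast, hX, div_eq_div_iff hDne' hABne]
      linear_combination (-(lam ε)) * hden4
    rw [intervalIntegral.integral_congr hEqOn, intervalIntegral.integral_const_mul,
      stmt13_key (r ε) hrabs]
    field_simp
  -- values at ε = 0
  have hl0 : lam 0 = -(Complex.I * (β:ℂ)) := by simp [hlamdef]
  have hw0v : w 0 = ((ωa * C : ℝ):ℂ) ^ 2 := by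
    simp only [hwdef, hlamdef]
    rw [hβdef]
    push_cast
    linear_combination ((ωa:ℂ) ^ 2 * (S:ℂ) ^ 2) * Complex.I_sq - (ωa:ℂ) ^ 2 * hpythC
  have hωCpos : (0:ℝ) < ωa * C := by positivity
  have hs0 : s 0 = ((ωa * C : ℝ):ℂ) := by
    have h2 : ((((2:ℕ):ℂ)))⁻¹ = (((1/2 : ℝ)):ℂ) := by norm_num
    have hroot : (((ωa*C)^2 : ℝ)) ^ ((1/2 : ℝ)) = ωa*C := by
      rw [← Real.rpow_natCast (ωa*C) 2, ← Real.rpow_mul (le_of_lt hωCpos)]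
      norm_num
    simp only [hsdef]
    rw [hw0v, h2,
      show ((((ωa*C:ℝ)):ℂ)) ^ 2 = (((ωa*C)^2 : ℝ):ℂ) by push_cast; ring,
      ← Complex.ofReal_cpow (by positivity) (1/2)]
    exact congrArg Complex.ofReal hroot
  have hu0v : u 0 = (C:ℂ) + (S:ℂ) * Complex.I := by
    simp only [hudef]
    rw [hs0, hl0, hβdef]
    push_cast
    field_simp
    ring
  have hr0v : r 0 = ((C:ℂ) + (S:ℂ) * Complex.I) ^ 2 := by
    simp only [hrdef]; rw [hu0v]
  have hexpE : (C:ℂ) + (S:ℂ) * Complex.I = Complex.exp (((Real.pi * k : ℝ):ℂ) * Complex.I) := by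
    rw [Complex.exp_mul_I, ← Complex.ofReal_cos, ← Complex.ofReal_sin, hSdef, hCdef]
  have hr0sq : (r 0) ^ 2 = Complex.exp (((4 * Real.pi * k : ℝ):ℂ) * Complex.I) := by
    rw [hr0v, hexpE, ← pow_mul, ← Complex.exp_nat_mul]
    congr 1
    push_cast
    ring
  have h1mr2 : (1:ℂ) - (r 0) ^ 2 ≠ 0 := by
    rw [hr0sq]
    intro h
    have h1 : Complex.exp (((4 * Real.pi * k : ℝ):ℂ) * Complex.I) = 1 := by
      linear_combination -h
    rw [Complex.exp_eq_one_iff] at h1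
    obtain ⟨n, hn⟩ := h1
    have him := congrArg Complex.im hn
    simp [Complex.mul_im, Complex.mul_re] at him
    have hk1 : (n:ℝ) = 2 * k := by
      have hπ0 : Real.pi ≠ 0 := ne_of_gt hπ
      have h2 : (n:ℝ) * (2 * Real.pi) = (2 * k) * (2 * Real.pi) := by linarith [him]
      exact mul_right_cancel₀ (by positivity) h2
    have h2 : (0:ℝ) < (n:ℝ) := by rw [hk1]; linarith
    have h3 : (n:ℝ) < 1 := by rw [hk1]; linarith
    have h4 : 0 < n := by exact_mod_cast h2
    have h5 : n < 1 := by exact_mod_cast h3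
    omega
  have hden0_ne : ((ωa:ℂ) ^ 2 * (1 - (r 0) ^ 2)) ≠ 0 :=
    mul_ne_zero (pow_ne_zero 2 hωa0) h1mr2
  have hωC : (((ωa * C : ℝ)):ℂ) ≠ 0 := by
    exact_mod_cast ne_of_gt hωCpos
  have hkey : 4 * lam 0 * r 0 * ((ωa * C : ℝ):ℂ) = (ωa:ℂ) ^ 2 * (1 - (r 0) ^ 2) := by
    rw [hl0, hr0v, hβdef]
    push_cast
    linear_combination ((ωa:ℂ)^2*((S:ℂ)^2*(C:ℂ)^2*(-2) + (S:ℂ)^4*(Complex.I^2 - 1))) * Complex.I_sq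
      + ((ωa:ℂ)^2*((S:ℂ)^2+(C:ℂ)^2+1)) * hpythC
  have hkeydiv : 4 * lam 0 * r 0 / ((ωa:ℂ) ^ 2 * (1 - (r 0) ^ 2)) = (((ωa * C : ℝ)):ℂ)⁻¹ := by
    have hCne : (C:ℂ) ≠ 0 := by exact_mod_cast ne_of_gt hC
    rw [div_eq_iff hden0_ne, ← hkey]
    field_simp
  have hcomb : (1 + (γ:ℂ) * ((((ωa * C : ℝ)):ℂ))⁻¹) = (((ωa * C + γ) / (ωa * C) : ℝ):ℂ) := by
    have h1 : ((ωa * C : ℝ)) ≠ 0 := ne_of_gt hωCpos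
    have hCne : (C:ℂ) ≠ 0 := by exact_mod_cast ne_of_gt hC
    rw [Complex.ofReal_div, eq_div_iff (by exact_mod_cast h1)]
    push_cast
    field_simp
  have hsum_ne : (1 + (γ:ℂ) * (4 * lam 0 * r 0 / ((ωa:ℂ) ^ 2 * (1 - (r 0) ^ 2)))) ≠ 0 := by
    rw [hkeydiv, hcomb]
    exact Complex.ofReal_ne_zero.mpr (ne_of_gt (by positivity))
  -- continuity
  have hclam : Continuous lam := by
    rw [hlamdef]; exact Complex.continuous_ofReal.sub continuous_const
  have hcw : Continuous w := by
    rw [hwdef]; exact (hclam.pow 2).add continuous_const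
  have hcs : ContinuousAt s 0 := by
    rw [hsdef]
    exact (continuousAt_cpow_const (hwslit 0)).comp hcw.continuousAt
  have hcu : ContinuousAt u 0 := by
    rw [hudef]
    exact (hcs.sub hclam.continuousAt).div_const _
  have hcr : ContinuousAt r 0 := by
    rw [hrdef]; exact hcu.pow 2
  obtain ⟨φ, hφdef⟩ : ∃ f : ℝ → ℂ, f = fun ε : ℝ =>
      (1 + (γ:ℂ) * (4 * lam ε * r ε / ((ωa:ℂ) ^ 2 * (1 - (r ε) ^ 2))))⁻¹ := ⟨_, rfl⟩
  have hφc : ContinuousAt φ 0 := by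
    rw [hφdef]
    refine ContinuousAt.inv₀ ?_ ?_
    · exact continuousAt_const.add (continuousAt_const.mul (ContinuousAt.div
        ((continuousAt_const.mul hclam.continuousAt).mul hcr)
        (continuousAt_const.mul (continuousAt_const.sub (hcr.pow 2))) hden0_ne))
    · exact hsum_ne
  have hφ0 : φ 0 = ((ωa * C / (ωa * C + γ) : ℝ):ℂ) := by
    rw [hφdef]
    simp only
    rw [hkeydiv, hcomb, ← Complex.ofReal_inv]
    congr 1
    rw [inv_div]
  have htd : Filter.Tendsto φ (nhdsWithin 0 (Set.Ioi 0))
      (nhds (((ωa * C / (ωa * C + γ) : ℝ):ℂ))) := by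
    rw [← hφ0]
    exact hφc.continuousWithinAt
  refine Filter.Tendsto.congr' ?_ htd
  filter_upwards [self_mem_nhdsWithin] with ε hε
  have hε' : (0:ℝ) < ε := hε
  rw [hφdef]
  simp only
  rw [show ((ε:ℂ) - Complex.I * (β:ℂ)) = lam ε by rw [hlamdef]]
  rw [hint ε hε']
end
end
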